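/- arXiv:0908.3381 — 5 statements merged into one kernel-verified Lean document; each statement's English description precedes it below -/
import Mathlib

section
/- Define the infinite matrix R(z) by R(z)_{j,k} = r_j^R(z) q_k^L(z) for j ≥ k and R(z)_{j,k} = q_j^R(z) r_k^L(z) for j ≤ k, where r_n^L, r_n^R are the scaled linearized errors associated with an arbitrary φ(z) ∈ ℂ. Then R(z)(zB − A) and (zB − A)R(z) are both (formally, entrywise) equal to the identity matrix. -/
/-- The entries of the infinite tridiagonal pencil `z B - A`. -/
noncomputable def pencilEntry (b l r : ℕ → ℂ) : ℕ → ℕ → ℂ := fun j k =>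
  if j = k then b j
  else if j = k + 1 then -(l k)
  else if k = j + 1 then -(r j)
  else 0

lemma pe_diag (b l r : ℕ → ℂ) (j k : ℕ) (h : j = k) : pencilEntry b l r j k = b j := by
  simp [pencilEntry, h]

lemma pe_sub (b l r : ℕ → ℂ) (j k : ℕ) (h : j = k + 1) : pencilEntry b l r j k = -(l k) := by
  subst h
  unfold pencilEntry
  rw [if_neg (by omega), if_pos rfl]

lemma pe_super (b l r : ℕ → ℂ) (j k : ℕ) (h : k = j + 1) : pencilEntry b l r j k = -(r j) := by
  subst h
  unfold pencilEntry
  rw [if_neg (by omega), if_neg (by omega), if_pos rfl]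

lemma pe_zero (b l r : ℕ → ℂ) (j k : ℕ) (h1 : j ≠ k) (h2 : j ≠ k + 1) (h3 : k ≠ j + 1) :
    pencilEntry b l r j k = 0 := by
  unfold pencilEntry
  rw [if_neg h1, if_neg h2, if_neg h3]

lemma wronskian_key (b l r qL pL qR pR : ℕ → ℂ)
    (hqL0 : qL 0 = 1)
    (hqL1 : l 0 * qL 1 - b 0 * qL 0 = 0)
    (hqLrec : ∀ n, l (n + 1) * qL (n + 2) - b (n + 1) * qL (n + 1) + r n * qL n = 0)
    (hpL0 : pL 0 = 0)
    (hpL1 : l 0 * pL 1 - b 0 * pL 0 + 1 * (-1) = 0)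
    (hpLrec : ∀ n, l (n + 1) * pL (n + 2) - b (n + 1) * pL (n + 1) + r n * pL n = 0)
    (hqR0 : qR 0 = 1)
    (hqR1 : r 0 * qR 1 - b 0 * qR 0 = 0)
    (hqRrec : ∀ n, r (n + 1) * qR (n + 2) - b (n + 1) * qR (n + 1) + l n * qR n = 0)
    (hpR0 : pR 0 = 0)
    (hpR1 : r 0 * pR 1 - b 0 * pR 0 + 1 * (-1) = 0)
    (hpRrec : ∀ n, r (n + 1) * pR (n + 2) - b (n + 1) * pR (n + 1) + l n * pR n = 0) :
    ∀ n, l n * (qR n * pL (n + 1) - pR n * qL (n + 1)) = 1 ∧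
      r n * (qL n * pR (n + 1) - pL n * qR (n + 1)) = 1 ∧
      qR n * pL n - pR n * qL n = 0 ∧
      qR (n + 1) * pL (n + 1) - pR (n + 1) * qL (n + 1) = 0 := by
  intro n
  induction n with
  | zero =>
    have hW0 : l 0 * (qR 0 * pL 1 - pR 0 * qL 1) = 1 := by
      rw [hqR0, hpR0]
      linear_combination hpL1 + b 0 * hpL0
    have hV0 : r 0 * (qL 0 * pR 1 - pL 0 * qR 1) = 1 := by
      rw [hqL0, hpL0]
      linear_combination hpR1 + b 0 * hpR0
    have hl0 : l 0 ≠ 0 := by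
      intro h; rw [h] at hW0; simp at hW0
    have hr0 : r 0 ≠ 0 := by
      intro h; rw [h] at hV0; simp at hV0
    have h1 : l 0 * qL 1 = b 0 := by linear_combination hqL1 + b 0 * hqL0
    have h2 : l 0 * pL 1 = 1 := by linear_combination hpL1 + b 0 * hpL0
    have h3 : r 0 * qR 1 = b 0 := by linear_combination hqR1 + b 0 * hqR0
    have h4 : r 0 * pR 1 = 1 := by linear_combination hpR1 + b 0 * hpR0
    have hE1 : l 0 * (r 0 * (qR 1 * pL 1 - pR 1 * qL 1)) = 0 := by
      linear_combination (l 0 * pL 1) * h3 + b 0 * h2 - (l 0 * qL 1) * h4 - h1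
    refine ⟨hW0, hV0, by rw [hqR0, hpR0, hpL0]; ring, ?_⟩
    rcases mul_eq_zero.mp hE1 with h | h
    · exact absurd h hl0
    rcases mul_eq_zero.mp h with h | h
    · exact absurd h hr0
    · exact h
  | succ n ih =>
    obtain ⟨hW, hV, hE, hE1⟩ := ih
    have hW1 : l (n + 1) * (qR (n + 1) * pL (n + 2) - pR (n + 1) * qL (n + 2)) = 1 := by
      linear_combination qR (n + 1) * hpLrec n - pR (n + 1) * hqLrec n +
        b (n + 1) * hE1 + hV
    have hV1 : r (n + 1) * (qL (n + 1) * pR (n + 2) - pL (n + 1) * qR (n + 2)) = 1 := by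
      linear_combination qL (n + 1) * hpRrec n - pL (n + 1) * hqRrec n -
        b (n + 1) * hE1 + hW
    have hl1 : l (n + 1) ≠ 0 := by
      intro h; rw [h] at hW1; simp at hW1
    have hr1 : r (n + 1) ≠ 0 := by
      intro h; rw [h] at hV1; simp at hV1
    have hE2 : l (n + 1) * (r (n + 1) * (qR (n + 2) * pL (n + 2) - pR (n + 2) * qL (n + 2))) = 0 := by
      linear_combination (l (n + 1) * pL (n + 2)) * hqRrec n +
        (b (n + 1) * qR (n + 1) - l n * qR n) * hpLrec n -
        (l (n + 1) * qL (n + 2)) * hpRrec n -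
        (b (n + 1) * pR (n + 1) - l n * pR n) * hqLrec n +
        b (n + 1) * (l n * hE1) + (b (n + 1) ^ 2 - b (n + 1) * l n) * hE1 - b (n + 1) * hW +
        b (n + 1) * hV + (l n * r n) * hE
    refine ⟨hW1, hV1, hE1, ?_⟩
    rcases mul_eq_zero.mp hE2 with h | h
    · exact absurd h hl1
    rcases mul_eq_zero.mp h with h | h
    · exact absurd h hr1
    · exact h

lemma main_aux (b l r : ℕ → ℂ) (φ : ℂ) (qL pL qR pR : ℕ → ℂ)
    (hqL0 : qL 0 = 1)
    (hqL1 : l 0 * qL 1 - b 0 * qL 0 = 0)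
    (hqLrec : ∀ n, l (n + 1) * qL (n + 2) - b (n + 1) * qL (n + 1) + r n * qL n = 0)
    (hpL0 : pL 0 = 0)
    (hpL1 : l 0 * pL 1 - b 0 * pL 0 + 1 * (-1) = 0)
    (hpLrec : ∀ n, l (n + 1) * pL (n + 2) - b (n + 1) * pL (n + 1) + r n * pL n = 0)
    (hqR0 : qR 0 = 1)
    (hqR1 : r 0 * qR 1 - b 0 * qR 0 = 0)
    (hqRrec : ∀ n, r (n + 1) * qR (n + 2) - b (n + 1) * qR (n + 1) + l n * qR n = 0)
    (hpR0 : pR 0 = 0)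
    (hpR1 : r 0 * pR 1 - b 0 * pR 0 + 1 * (-1) = 0)
    (hpRrec : ∀ n, r (n + 1) * pR (n + 2) - b (n + 1) * pR (n + 1) + l n * pR n = 0)
    (rL rR : ℕ → ℂ)
    (hrL : ∀ n, rL n = qL n * φ - pL n)
    (hrR : ∀ n, rR n = qR n * φ - pR n)
    (R : ℕ → ℕ → ℂ)
    (hR : ∀ j k, R j k = if k ≤ j then rR j * qL k else qR j * rL k) :
    ∀ j k : ℕ,
      (∑' i : ℕ, R j i * pencilEntry b l r i k) = (if j = k then 1 else 0) ∧
      (∑' i : ℕ, pencilEntry b l r j i * R i k) = (if j = k then 1 else 0) := by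
  have key := wronskian_key b l r qL pL qR pR hqL0 hqL1 hqLrec hpL0 hpL1 hpLrec
    hqR0 hqR1 hqRrec hpR0 hpR1 hpRrec
  have hW : ∀ n, l n * (qR n * pL (n + 1) - pR n * qL (n + 1)) = 1 := fun n => (key n).1
  have hE : ∀ n, qR n * pL n - pR n * qL n = 0 := fun n => (key n).2.2.1
  have hrLrec : ∀ n, l (n + 1) * rL (n + 2) - b (n + 1) * rL (n + 1) + r n * rL n = 0 := by
    intro n
    rw [hrL, hrL, hrL]
    linear_combination φ * hqLrec n - hpLrec n
  have hrRrec : ∀ n, r (n + 1) * rR (n + 2) - b (n + 1) * rR (n + 1) + l n * rR n = 0 := by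
    intro n
    rw [hrR, hrR, hrR]
    linear_combination φ * hqRrec n - hpRrec n
  intro j k
  constructor
  · -- R * (zB - A)
    rcases k with _ | m
    · rw [tsum_eq_sum (s := ({0, 1} : Finset ℕ)) (by
        intro i hi
        simp only [Finset.mem_insert, Finset.mem_singleton] at hi
        push_neg at hi
        rw [pe_zero b l r i 0 (by omega) (by omega) (by omega), mul_zero]),
        Finset.sum_pair (by omega : (0 : ℕ) ≠ 1),
        pe_diag b l r 0 0 rfl, pe_sub b l r 1 0 rfl]
      rcases Nat.eq_zero_or_pos j with hj | hj
      · subst hj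
        rw [if_pos rfl, hR, hR, if_pos (le_refl 0), if_neg (by omega),
          hrR 0, hrL 1, hqL0, hqR0, hpR0]
        linear_combination -φ * hqL1 - φ * b 0 * hqL0 + hpL1 + b 0 * hpL0
      · rw [if_neg (by omega), hR j 0, if_pos (by omega), hR j 1, if_pos (by omega), hrR j]
        linear_combination -(qR j * φ - pR j) * hqL1
    · rw [tsum_eq_sum (s := ({m, m + 1, m + 2} : Finset ℕ)) (by
        intro i hi
        simp only [Finset.mem_insert, Finset.mem_singleton] at hi
        push_neg at hi
        rw [pe_zero b l r i (m + 1) (by omega) (by omega) (by omega), mul_zero]),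
        Finset.sum_insert (by simp only [Finset.mem_insert, Finset.mem_singleton]; omega),
        Finset.sum_pair (by omega : m + 1 ≠ m + 2),
        pe_super b l r m (m + 1) rfl, pe_diag b l r (m + 1) (m + 1) rfl,
        pe_sub b l r (m + 2) (m + 1) rfl]
      have hcase : j < m ∨ j = m ∨ j = m + 1 ∨ m + 2 ≤ j := by omega
      rcases hcase with h | h | h | h
      · rw [if_neg (by omega), hR j m, if_neg (by omega), hR j (m + 1), if_neg (by omega),
          hR j (m + 2), if_neg (by omega)]
        linear_combination -(qR j) * hrLrec m
      · subst h
        rw [if_neg (by omega), hR j j, if_pos (le_refl j), hR j (j + 1), if_neg (by omega),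
          hR j (j + 2), if_neg (by omega), hrR j, hrL (j + 1), hrL (j + 2)]
        linear_combination -φ * (qR j) * hqLrec j + qR j * hpLrec j - r j * hE j
      · subst h
        rw [if_pos rfl, hR (m + 1) m, if_pos (by omega), hR (m + 1) (m + 1),
          if_pos (le_refl (m + 1)), hR (m + 1) (m + 2), if_neg (by omega),
          hrR (m + 1), hrL (m + 2)]
        linear_combination -(qR (m + 1) * φ - pR (m + 1)) * hqLrec m + hW (m + 1)
      · rw [if_neg (by omega), hR j m, if_pos (by omega), hR j (m + 1), if_pos (by omega),
          hR j (m + 2), if_pos (by omega)]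
        linear_combination -(rR j) * hqLrec m
  · -- (zB - A) * R
    rcases j with _ | n
    · rw [tsum_eq_sum (s := ({0, 1} : Finset ℕ)) (by
        intro i hi
        simp only [Finset.mem_insert, Finset.mem_singleton] at hi
        push_neg at hi
        rw [pe_zero b l r 0 i (by omega) (by omega) (by omega), zero_mul]),
        Finset.sum_pair (by omega : (0 : ℕ) ≠ 1),
        pe_diag b l r 0 0 rfl, pe_super b l r 0 1 rfl]
      have hcase : k = 0 ∨ k = 1 ∨ 2 ≤ k := by omega
      rcases hcase with h | h | h
      · subst h
        rw [if_pos rfl, hR 0 0, if_pos (le_refl 0), hR 1 0, if_pos (by omega),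
          hrR 0, hrR 1]
        linear_combination (-φ * qL 0) * hqR1 + qL 0 * hpR1 + hqL0
      · subst h
        rw [if_neg (by omega), hR 0 1, if_neg (by omega), hR 1 1, if_pos (le_refl 1),
          hrL 1, hrR 1]
        linear_combination (-φ * qL 1 + pL 1) * hqR1 - r 0 * hE 1
      · rw [if_neg (by omega), hR 0 k, if_neg (by omega), hR 1 k, if_neg (by omega)]
        linear_combination -(rL k) * hqR1
    · rw [tsum_eq_sum (s := ({n, n + 1, n + 2} : Finset ℕ)) (by
        intro i hi
        simp only [Finset.mem_insert, Finset.mem_singleton] at hi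
        push_neg at hi
        rw [pe_zero b l r (n + 1) i (by omega) (by omega) (by omega), zero_mul]),
        Finset.sum_insert (by simp only [Finset.mem_insert, Finset.mem_singleton]; omega),
        Finset.sum_pair (by omega : n + 1 ≠ n + 2),
        pe_sub b l r (n + 1) n rfl, pe_diag b l r (n + 1) (n + 1) rfl,
        pe_super b l r (n + 1) (n + 2) rfl]
      have hcase : k ≤ n ∨ k = n + 1 ∨ k = n + 2 ∨ n + 3 ≤ k := by omega
      rcases hcase with h | h | h | h
      · rw [if_neg (by omega), hR n k, if_pos (by omega), hR (n + 1) k, if_pos (by omega),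
          hR (n + 2) k, if_pos (by omega)]
        linear_combination -(qL k) * hrRrec n
      · subst h
        rw [if_pos rfl, hR n (n + 1), if_neg (by omega), hR (n + 1) (n + 1),
          if_pos (le_refl (n + 1)), hR (n + 2) (n + 1), if_pos (by omega)]
        linear_combination -(qL (n + 1)) * hrRrec n + (l n * qL (n + 1)) * hrR n -
          (l n * qR n) * hrL (n + 1) + hW n
      · subst h
        rw [if_neg (by omega), hR n (n + 2), if_neg (by omega), hR (n + 1) (n + 2),
          if_neg (by omega), hR (n + 2) (n + 2), if_pos (le_refl (n + 2))]
        linear_combination -(rL (n + 2)) * hqRrec n + (r (n + 1) * qR (n + 2)) * hrL (n + 2) -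
          (r (n + 1) * qL (n + 2)) * hrR (n + 2) - (r (n + 1)) * hE (n + 2)
      · rw [if_neg (by omega), hR n k, if_neg (by omega), hR (n + 1) k, if_neg (by omega),
          hR (n + 2) k, if_neg (by omega)]
        linear_combination -(rL k) * hqRrec n

/-- Define the infinite matrix `R z` by `R j k = rᴿ j * qᴸ k` for `j ≥ k` and
`R j k = qᴿ j * rᴸ k` for `j ≤ k`, where `rᴸ n = qᴸ n * φ - pᴸ n`,
`rᴿ n = qᴿ n * φ - pᴿ n` are the scaled linearized errors associated with an arbitrary
`φ ∈ ℂ`.  Then `R (z B - A)` and `(z B - A) R` are both, entrywise (each entry of the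
formal product being a finite sum since the pencil is tridiagonal), equal to the identity
matrix. -/
theorem stmt_8 (β αL αR : ℕ → Polynomial ℂ)
    (hβ : ∀ n, (β n).degree ≤ 1) (hαL : ∀ n, (αL n).degree ≤ 1)
    (hαR : ∀ n, (αR n).degree ≤ 1)
    (z φ : ℂ) (qL pL qR pR : ℕ → ℂ)
    (hqL0 : qL 0 = 1)
    (hqL1 : (αL 0).eval z * qL 1 - (β 0).eval z * qL 0 = 0)
    (hqLrec : ∀ n, (αL (n + 1)).eval z * qL (n + 2) - (β (n + 1)).eval z * qL (n + 1) +
      (αR n).eval z * qL n = 0)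
    (hpL0 : pL 0 = 0)
    (hpL1 : (αL 0).eval z * pL 1 - (β 0).eval z * pL 0 + 1 * (-1) = 0)
    (hpLrec : ∀ n, (αL (n + 1)).eval z * pL (n + 2) - (β (n + 1)).eval z * pL (n + 1) +
      (αR n).eval z * pL n = 0)
    (hqR0 : qR 0 = 1)
    (hqR1 : (αR 0).eval z * qR 1 - (β 0).eval z * qR 0 = 0)
    (hqRrec : ∀ n, (αR (n + 1)).eval z * qR (n + 2) - (β (n + 1)).eval z * qR (n + 1) +
      (αL n).eval z * qR n = 0)
    (hpR0 : pR 0 = 0)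
    (hpR1 : (αR 0).eval z * pR 1 - (β 0).eval z * pR 0 + 1 * (-1) = 0)
    (hpRrec : ∀ n, (αR (n + 1)).eval z * pR (n + 2) - (β (n + 1)).eval z * pR (n + 1) +
      (αL n).eval z * pR n = 0)
    (rL rR : ℕ → ℂ)
    (hrL : ∀ n, rL n = qL n * φ - pL n)
    (hrR : ∀ n, rR n = qR n * φ - pR n)
    (R : ℕ → ℕ → ℂ)
    (hR : ∀ j k, R j k = if k ≤ j then rR j * qL k else qR j * rL k) :
    ∀ j k : ℕ,
      (∑' i : ℕ, R j i *
          pencilEntry (fun n => (β n).eval z) (fun n => (αL n).eval z)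
            (fun n => (αR n).eval z) i k) = (if j = k then 1 else 0) ∧
      (∑' i : ℕ,
          pencilEntry (fun n => (β n).eval z) (fun n => (αL n).eval z)
            (fun n => (αR n).eval z) j i * R i k) = (if j = k then 1 else 0) := by
  exact main_aux (fun n => (β n).eval z) (fun n => (αL n).eval z) (fun n => (αR n).eval z)
    φ qL pL qR pR hqL0 hqL1 hqLrec hpL0 hpL1 hpLrec hqR0 hqR1 hqRrec hpR0 hpR1 hpRrec
    rL rR hrL hrR R hR
end

section
/- Assume 0 ∉ closure(Θ(B)) for bounded operators A, B on ℓ². Then for each z with dist(z, W(A,B)) > 0, the operator zB − A is boundedly invertible with ‖(zB−A)^{-1}‖ ≤ 1/(d · dist(z, W(A,B))), and the truncated resolvents converge strongly: for every η ∈ ℓ², (zB_{[0:n]} − A_{[0:n]})^{-1}η → (zB − A)^{-1}η as n → ∞ (finite sections regarded as operators on ℓ² in the natural way). -/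
noncomputable section

open Filter Matrix

/-- The underlying Hilbert space `ℓ²(ℕ)`. -/
abbrev ellTwo : Type := lp (fun _ : ℕ => ℂ) 2

/-- The standard basis vectors of `ℓ²`. -/
def stdBasis (j : ℕ) : ellTwo := lp.single 2 j 1

/-- The numerical range `W(A,B)` of the linear pencil `z B - A`. -/
def numericalRange (A B : ellTwo →L[ℂ] ellTwo) : Set ℂ :=
  {z : ℂ | ∃ y : ellTwo, y ≠ 0 ∧ (inner ℂ ((z • B - A) y) y : ℂ) = 0}

/-- The finite section `z B_{[0:n]} - A_{[0:n]}` as an `(n+1) × (n+1)` matrix. -/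
def finiteSection (A B : ellTwo →L[ℂ] ellTwo) (z : ℂ) (n : ℕ) :
    Matrix (Fin (n + 1)) (Fin (n + 1)) ℂ :=
  Matrix.of fun i j =>
    z * (inner ℂ (stdBasis (i : ℕ)) (B (stdBasis (j : ℕ))) : ℂ) -
      (inner ℂ (stdBasis (i : ℕ)) (A (stdBasis (j : ℕ))) : ℂ)

def eb : ℕ → ellTwo := _root_.stdBasis

lemma inner_eb_left (f : ellTwo) (i : ℕ) : (inner ℂ (eb i) f : ℂ) = f i := by
  simp [eb, _root_.stdBasis, lp.inner_single_left]

lemma orthonormal_eb : Orthonormal ℂ eb := by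
  rw [orthonormal_iff_ite]
  intro i j
  simp [eb, _root_.stdBasis, lp.inner_single_left, lp.single_apply, Pi.single_apply]

lemma hasSum_eb (f : ellTwo) : HasSum (fun i : ℕ => (f i) • eb i) f := by
  have := lp.hasSum_single ENNReal.ofNat_ne_top f
  convert this using 2 with i
  rw [eb, _root_.stdBasis, ← lp.single_smul]
  norm_num

lemma eb_apply (i k : ℕ) : (eb i : ∀ _ : ℕ, ℂ) k = if i = k then 1 else 0 := by
  rw [eb, _root_.stdBasis]
  exact lp.single_apply 2 i 1 k |>.trans (by simp [Pi.single_apply, eq_comm])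

def embedV (n : ℕ) (v : Fin (n + 1) → ℂ) : ellTwo := ∑ j : Fin (n + 1), v j • eb (j : ℕ)

lemma orthonormal_ebFin (n : ℕ) : Orthonormal ℂ (fun j : Fin (n+1) => eb (j : ℕ)) :=
  orthonormal_eb.comp _ Fin.val_injective

lemma finiteSection_apply (A B : ellTwo →L[ℂ] ellTwo) (z : ℂ) (n : ℕ) (i j : Fin (n + 1)) :
    finiteSection A B z n i j = inner ℂ (eb (i : ℕ)) ((z • B - A) (eb (j : ℕ))) := by
  show z * (inner ℂ (eb (i:ℕ)) (B (eb (j:ℕ))) : ℂ) - (inner ℂ (eb (i:ℕ)) (A (eb (j:ℕ))) : ℂ) = _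
  rw [ContinuousLinearMap.sub_apply, ContinuousLinearMap.smul_apply, inner_sub_right,
    inner_smul_right]

lemma inner_eb_embedV (n : ℕ) (v : Fin (n + 1) → ℂ) (i : Fin (n + 1)) :
    (inner ℂ (eb (i : ℕ)) (embedV n v) : ℂ) = v i := by
  rw [embedV, inner_sum]
  have h := orthonormal_iff_ite.mp (orthonormal_ebFin n)
  simp only [inner_smul_right]
  rw [Finset.sum_eq_single i]
  · rw [h i i]; simp
  · intro j _ hj
    rw [h i j]
    simp [hj.symm]
  · simp

lemma embedV_coord (n : ℕ) (v : Fin (n + 1) → ℂ) (k : ℕ) :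
    (embedV n v : ∀ _ : ℕ, ℂ) k = if h : k < n + 1 then v ⟨k, h⟩ else 0 := by
  rw [← inner_eb_left]
  split_ifs with h
  · exact inner_eb_embedV n v ⟨k, h⟩
  · rw [embedV, inner_sum]
    apply Finset.sum_eq_zero
    intro j _
    rw [inner_smul_right]
    have := orthonormal_iff_ite.mp orthonormal_eb k (j : ℕ)
    rw [this]
    have : k ≠ (j : ℕ) := by
      intro hk; exact h (hk ▸ j.isLt)
    simp [this]

lemma mulVec_eq (A B : ellTwo →L[ℂ] ellTwo) (z : ℂ) (n : ℕ) (v : Fin (n + 1) → ℂ)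
    (i : Fin (n + 1)) :
    (finiteSection A B z n *ᵥ v) i = inner ℂ (eb (i : ℕ)) ((z • B - A) (embedV n v)) := by
  rw [embedV, map_sum, inner_sum]
  show ∑ j, finiteSection A B z n i j * v j = _
  apply Finset.sum_congr rfl
  intro j _
  rw [finiteSection_apply, _root_.map_smul, inner_smul_right]
  ring

lemma inner_embedV_embedV (n : ℕ) (v w : Fin (n + 1) → ℂ) :
    (inner ℂ (embedV n v) (embedV n w) : ℂ) = ∑ i : Fin (n + 1), starRingEnd ℂ (v i) * w i :=
  (orthonormal_ebFin n).inner_sum v w Finset.univ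

lemma norm_embedV_sq (n : ℕ) (v : Fin (n + 1) → ℂ) :
    ‖embedV n v‖ ^ 2 = ∑ i : Fin (n + 1), ‖v i‖ ^ 2 := by
  have h1 : ((‖embedV n v‖ : ℝ) : ℂ) ^ 2 = inner ℂ (embedV n v) (embedV n v) := by
    rw [inner_self_eq_norm_sq_to_K]
    norm_cast
  rw [inner_embedV_embedV] at h1
  have : ∀ i : Fin (n+1), starRingEnd ℂ (v i) * v i = ((‖v i‖ ^ 2 : ℝ) : ℂ) := by
    intro i
    rw [Complex.conj_mul']
    norm_cast
  rw [Finset.sum_congr rfl (fun i _ => this i)] at h1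
  have := congrArg Complex.re h1
  simpa [← Complex.ofReal_pow, Complex.ofReal_re] using this

lemma bessel_embedV (n : ℕ) (η : ellTwo) :
    ‖embedV n (fun i : Fin (n + 1) => η (i : ℕ))‖ ≤ ‖η‖ := by
  have h1 := norm_embedV_sq n (fun i : Fin (n + 1) => η (i : ℕ))
  have h2 : ∑ i : Fin (n + 1), ‖η (i : ℕ)‖ ^ 2 ≤ ‖η‖ ^ 2 := by
    have := (orthonormal_ebFin n).sum_inner_products_le (x := η) (s := Finset.univ)
    simpa [inner_eb_left] using this
  nlinarith [norm_nonneg (embedV n (fun i : Fin (n + 1) => η (i : ℕ))), norm_nonneg η]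

lemma coercive_unit (A B : ellTwo →L[ℂ] ellTwo) {d : ℝ}
    (hd : d ∈ lowerBounds {r : ℝ | ∃ f : ellTwo, ‖f‖ = 1 ∧ r = ‖(inner ℂ (B f) f : ℂ)‖})
    (hdpos : 0 < d) (z : ℂ) (g : ellTwo) (hg : ‖g‖ = 1) :
    d * Metric.infDist z (numericalRange A B) ≤ ‖(inner ℂ ((z • B - A) g) g : ℂ)‖ := by
  set b : ℂ := inner ℂ (B g) g with hb
  set a : ℂ := inner ℂ (A g) g with ha
  have hdb : d ≤ ‖b‖ := hd ⟨g, hg, rfl⟩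
  have hbne : b ≠ 0 := by
    intro h; rw [h] at hdb; simp at hdb; linarith
  have hg0 : g ≠ 0 := by intro h; rw [h] at hg; simp at hg
  set w : ℂ := starRingEnd ℂ (a / b) with hw
  have hwmem : w ∈ numericalRange A B := by
    refine ⟨g, hg0, ?_⟩
    have : (inner ℂ ((w • B - A) g) g : ℂ) = starRingEnd ℂ w * b - a := by
      simp [inner_sub_left, inner_smul_left, hb, ha]
      ring
    rw [this, hw]
    rw [Complex.conj_conj, div_mul_cancel₀ a hbne, sub_self]
  have hval : (inner ℂ ((z • B - A) g) g : ℂ) = starRingEnd ℂ z * b - a := by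
    simp [inner_sub_left, inner_smul_left]
    rw [hb, ha]; ring
  have hnorm : ‖(inner ℂ ((z • B - A) g) g : ℂ)‖ = ‖b‖ * dist z w := by
    rw [hval]
    have : starRingEnd ℂ z * b - a = b * (starRingEnd ℂ z - a / b) := by field_simp
    rw [this, norm_mul]
    congr 1
    rw [dist_eq_norm, hw]
    rw [show starRingEnd ℂ z - a / b = starRingEnd ℂ (z - starRingEnd ℂ (a/b)) by
      simp [map_sub]]
    exact RCLike.norm_conj _
  rw [hnorm]
  exact mul_le_mul hdb (Metric.infDist_le_dist_of_mem hwmem) Metric.infDist_nonneg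
    (le_of_lt (lt_of_lt_of_le hdpos hdb))

lemma coercive (A B : ellTwo →L[ℂ] ellTwo) {d : ℝ}
    (hd : d ∈ lowerBounds {r : ℝ | ∃ f : ellTwo, ‖f‖ = 1 ∧ r = ‖(inner ℂ (B f) f : ℂ)‖})
    (hdpos : 0 < d) (z : ℂ) (f : ellTwo) :
    d * Metric.infDist z (numericalRange A B) * ‖f‖ ^ 2 ≤
      ‖(inner ℂ ((z • B - A) f) f : ℂ)‖ := by
  rcases eq_or_ne f 0 with rfl | hf
  · simp
  · have hnf : (0:ℝ) < ‖f‖ := norm_pos_iff.mpr hf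
    set g : ellTwo := (‖f‖⁻¹ : ℂ) • f with hgdef
    have hg : ‖g‖ = 1 := by
      rw [hgdef, norm_smul]
      simp [norm_inv, hnf.ne']
    have hfg : f = (‖f‖ : ℂ) • g := by
      rw [hgdef, smul_smul]
      rw [mul_inv_cancel₀ (by exact_mod_cast hnf.ne')]
      simp
    have key := coercive_unit A B hd hdpos z g hg
    have hrw : (inner ℂ ((z • B - A) f) f : ℂ) =
        (‖f‖ ^ 2 : ℝ) * (inner ℂ ((z • B - A) g) g : ℂ) := by
      conv_lhs => rw [hfg]
      rw [_root_.map_smul, inner_smul_left, inner_smul_right]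
      simp [inner_sub_left, inner_smul_left, Complex.conj_ofReal]
      push_cast
      ring
    rw [hrw, norm_mul]
    have : ‖((‖f‖ ^ 2 : ℝ) : ℂ)‖ = ‖f‖ ^ 2 := by
      rw [Complex.norm_real, Real.norm_eq_abs, abs_of_nonneg (by positivity)]
    rw [this]
    calc d * Metric.infDist z (numericalRange A B) * ‖f‖ ^ 2
        ≤ ‖(inner ℂ ((z • B - A) g) g : ℂ)‖ * ‖f‖ ^ 2 := by
          apply mul_le_mul_of_nonneg_right key (by positivity)
      _ = ‖f‖ ^ 2 * ‖(inner ℂ ((z • B - A) g) g : ℂ)‖ := by ring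

lemma norm_T_lower (A B : ellTwo →L[ℂ] ellTwo) {d : ℝ}
    (hd : d ∈ lowerBounds {r : ℝ | ∃ f : ellTwo, ‖f‖ = 1 ∧ r = ‖(inner ℂ (B f) f : ℂ)‖})
    (hdpos : 0 < d) (z : ℂ) (f : ellTwo) :
    d * Metric.infDist z (numericalRange A B) * ‖f‖ ≤ ‖(z • B - A) f‖ := by
  rcases eq_or_ne f 0 with rfl | hf
  · simp
  · have hnf : (0:ℝ) < ‖f‖ := norm_pos_iff.mpr hf
    have h1 := coercive A B hd hdpos z f
    have h2 : ‖(inner ℂ ((z • B - A) f) f : ℂ)‖ ≤ ‖(z • B - A) f‖ * ‖f‖ :=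
      norm_inner_le_norm _ _
    have := h1.trans h2
    rw [pow_two, ← mul_assoc] at this
    exact le_of_mul_le_mul_right this hnf

lemma exists_R (A B : ellTwo →L[ℂ] ellTwo) {d : ℝ}
    (hd : d ∈ lowerBounds {r : ℝ | ∃ f : ellTwo, ‖f‖ = 1 ∧ r = ‖(inner ℂ (B f) f : ℂ)‖})
    (hdpos : 0 < d) (z : ℂ) (hz : 0 < Metric.infDist z (numericalRange A B)) :
    ∃ R : ellTwo →L[ℂ] ellTwo,
      (∀ x, R ((z • B - A) x) = x) ∧
      (∀ x, (z • B - A) (R x) = x) ∧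
      ‖R‖ ≤ 1 / (d * Metric.infDist z (numericalRange A B)) ∧
      ∀ x, ‖R x‖ ≤ 1 / (d * Metric.infDist z (numericalRange A B)) * ‖x‖ := by
  set T : ellTwo →L[ℂ] ellTwo := z • B - A with hT
  set c : ℝ := d * Metric.infDist z (numericalRange A B) with hc
  have hcpos : 0 < c := mul_pos hdpos hz
  have lower : ∀ f, c * ‖f‖ ≤ ‖T f‖ := fun f => norm_T_lower A B hd hdpos z f
  have hinj : Function.Injective T := by
    intro x y hxy
    have h1 : T (x - y) = 0 := by rw [map_sub, hxy, sub_self]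
    have h2 := lower (x - y)
    rw [h1, norm_zero] at h2
    have h3 : ‖x - y‖ ≤ 0 := by nlinarith [norm_nonneg (x - y)]
    have := le_antisymm h3 (norm_nonneg _)
    rwa [norm_eq_zero, sub_eq_zero] at this
  have hanti : AntilipschitzWith (⟨c, hcpos.le⟩ : NNReal)⁻¹ T := by
    apply ContinuousLinearMap.antilipschitz_of_bound
    intro x
    have h := lower x
    have hcoe : (((⟨c, hcpos.le⟩ : NNReal)⁻¹ : NNReal) : ℝ) = c⁻¹ := NNReal.coe_inv _
    rw [hcoe, inv_mul_eq_div, le_div_iff₀ hcpos]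
    linarith
  have hclosed : IsClosed (Set.range T) := hanti.isClosed_range T.uniformContinuous
  have hKclosed : IsClosed ((LinearMap.range (T : ellTwo →ₗ[ℂ] ellTwo) : Submodule ℂ ellTwo) : Set ellTwo) := by
    rw [LinearMap.coe_range]
    exact hclosed
  haveI : CompleteSpace (LinearMap.range (T : ellTwo →ₗ[ℂ] ellTwo) : Submodule ℂ ellTwo) := hKclosed.completeSpace_coe
  have hbot : (LinearMap.range (T : ellTwo →ₗ[ℂ] ellTwo) : Submodule ℂ ellTwo)ᗮ = ⊥ := by
    rw [Submodule.eq_bot_iff]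
    intro y hy
    by_contra hy0
    have h0 : (inner ℂ (T y) y : ℂ) = 0 :=
      (Submodule.mem_orthogonal _ y).mp hy (T y) (LinearMap.mem_range_self _ y)
    have hmem : z ∈ numericalRange A B := ⟨y, hy0, h0⟩
    have := Metric.infDist_zero_of_mem hmem
    rw [this] at hz
    exact lt_irrefl 0 hz
  have htop : LinearMap.range (T : ellTwo →ₗ[ℂ] ellTwo) = (⊤ : Submodule ℂ ellTwo) :=
    Submodule.orthogonal_eq_bot_iff.mp hbot
  have hsurj : Function.Surjective T := LinearMap.range_eq_top.mp htop
  set e : ellTwo ≃ₗ[ℂ] ellTwo := LinearEquiv.ofBijective (T : ellTwo →ₗ[ℂ] ellTwo) ⟨hinj, hsurj⟩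
    with he
  have hTe : ∀ x, T (e.symm x) = x := fun x => e.apply_symm_apply x
  have hbound : ∀ x, ‖e.symm x‖ ≤ (1 / c) * ‖x‖ := by
    intro x
    have := lower (e.symm x)
    rw [hTe x] at this
    rw [one_div, inv_mul_eq_div, le_div_iff₀' hcpos]
    exact this
  refine ⟨LinearMap.mkContinuous (e.symm : ellTwo →ₗ[ℂ] ellTwo) (1 / c) hbound, ?_, ?_, ?_, ?_⟩
  · intro x
    show e.symm (T x) = x
    exact e.symm_apply_apply x
  · intro x
    show T (e.symm x) = x
    exact hTe x
  · exact LinearMap.mkContinuous_norm_le _ (by positivity) hbound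
  · exact hbound

lemma coerciveM (A B : ellTwo →L[ℂ] ellTwo) {d : ℝ}
    (hd : d ∈ lowerBounds {r : ℝ | ∃ f : ellTwo, ‖f‖ = 1 ∧ r = ‖(inner ℂ (B f) f : ℂ)‖})
    (hdpos : 0 < d) (z : ℂ) (n : ℕ) (v : Fin (n + 1) → ℂ) :
    d * Metric.infDist z (numericalRange A B) * ‖embedV n v‖ ≤
      ‖embedV n (finiteSection A B z n *ᵥ v)‖ := by
  set c : ℝ := d * Metric.infDist z (numericalRange A B) with hc
  set f : ellTwo := embedV n v with hf
  set g : ellTwo := embedV n (finiteSection A B z n *ᵥ v) with hg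
  have key : (inner ℂ f ((z • B - A) f) : ℂ) = inner ℂ f g := by
    rw [hg, inner_embedV_embedV]
    conv_lhs => rw [hf, embedV]
    rw [sum_inner]
    apply Finset.sum_congr rfl
    intro i _
    rw [inner_smul_left, mulVec_eq]
    rw [embedV]
  have h1 : c * ‖f‖ ^ 2 ≤ ‖(inner ℂ ((z • B - A) f) f : ℂ)‖ := coercive A B hd hdpos z f
  have h2 : ‖(inner ℂ ((z • B - A) f) f : ℂ)‖ = ‖(inner ℂ f g : ℂ)‖ := by
    rw [← key, ← inner_conj_symm, RCLike.norm_conj]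
  have h3 : ‖(inner ℂ f g : ℂ)‖ ≤ ‖f‖ * ‖g‖ := norm_inner_le_norm _ _
  rcases eq_or_ne ‖f‖ 0 with h0 | h0
  · rw [h0, mul_zero]; exact norm_nonneg _
  · have hfpos : 0 < ‖f‖ := lt_of_le_of_ne (norm_nonneg _) (Ne.symm h0)
    have : c * ‖f‖ ^ 2 ≤ ‖f‖ * ‖g‖ := h1.trans (h2 ▸ h3)
    nlinarith

lemma isUnit_det (A B : ellTwo →L[ℂ] ellTwo) {d : ℝ}
    (hd : d ∈ lowerBounds {r : ℝ | ∃ f : ellTwo, ‖f‖ = 1 ∧ r = ‖(inner ℂ (B f) f : ℂ)‖})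
    (hdpos : 0 < d) (z : ℂ) (hz : 0 < Metric.infDist z (numericalRange A B)) (n : ℕ) :
    IsUnit (finiteSection A B z n).det := by
  rw [isUnit_iff_ne_zero]
  intro hdet
  obtain ⟨v, hv, hv0⟩ := (Matrix.exists_mulVec_eq_zero_iff).mpr hdet
  have h1 := coerciveM A B hd hdpos z n v
  rw [hv0] at h1
  have h2 : embedV n (0 : Fin (n+1) → ℂ) = 0 := by simp [embedV]
  rw [h2, norm_zero] at h1
  have hcpos : 0 < d * Metric.infDist z (numericalRange A B) := mul_pos hdpos hz
  have h3 : ‖embedV n v‖ = 0 := le_antisymm (by nlinarith [norm_nonneg (embedV n v)]) (norm_nonneg _)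
  apply hv
  funext i
  have := inner_eb_embedV n v i
  rw [norm_eq_zero] at h3
  rw [h3] at this
  simpa using this.symm

lemma inv_bound (A B : ellTwo →L[ℂ] ellTwo) {d : ℝ}
    (hd : d ∈ lowerBounds {r : ℝ | ∃ f : ellTwo, ‖f‖ = 1 ∧ r = ‖(inner ℂ (B f) f : ℂ)‖})
    (hdpos : 0 < d) (z : ℂ) (hz : 0 < Metric.infDist z (numericalRange A B)) (n : ℕ)
    (w : Fin (n + 1) → ℂ) :
    ‖embedV n ((finiteSection A B z n)⁻¹ *ᵥ w)‖ ≤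
      1 / (d * Metric.infDist z (numericalRange A B)) * ‖embedV n w‖ := by
  set c : ℝ := d * Metric.infDist z (numericalRange A B) with hc
  have hcpos : 0 < c := mul_pos hdpos hz
  have key := coerciveM A B hd hdpos z n ((finiteSection A B z n)⁻¹ *ᵥ w)
  rw [Matrix.mulVec_mulVec, Matrix.mul_nonsing_inv _ (isUnit_det A B hd hdpos z hz n),
    Matrix.one_mulVec] at key
  rw [one_div, inv_mul_eq_div, le_div_iff₀' hcpos]
  exact key

lemma trunc_embedV (m : ℕ) (u : Fin (m + 1) → ℂ) {n : ℕ} (h : m ≤ n) :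
    embedV n (fun i : Fin (n + 1) => (embedV m u) (i : ℕ)) = embedV m u := by
  apply lp.ext
  funext k
  rw [embedV_coord]
  split_ifs with hk
  · rfl
  · rw [embedV_coord]
    rw [dif_neg]
    omega

lemma section_exact (A B : ellTwo →L[ℂ] ellTwo) {d : ℝ}
    (hd : d ∈ lowerBounds {r : ℝ | ∃ f : ellTwo, ‖f‖ = 1 ∧ r = ‖(inner ℂ (B f) f : ℂ)‖})
    (hdpos : 0 < d) (z : ℂ) (hz : 0 < Metric.infDist z (numericalRange A B)) (n : ℕ)
    (ψ : ellTwo) (hψ : embedV n (fun i : Fin (n + 1) => ψ (i : ℕ)) = ψ) :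
    embedV n ((finiteSection A B z n)⁻¹ *ᵥ fun i : Fin (n + 1) => ((z • B - A) ψ) (i : ℕ)) =
      ψ := by
  have key : (finiteSection A B z n *ᵥ fun i : Fin (n + 1) => ψ (i : ℕ)) =
      fun i : Fin (n + 1) => ((z • B - A) ψ) (i : ℕ) := by
    funext i
    rw [mulVec_eq, hψ, inner_eb_left]
  rw [← key, Matrix.mulVec_mulVec, Matrix.nonsing_inv_mul _ (isUnit_det A B hd hdpos z hz n),
    Matrix.one_mulVec, hψ]

lemma embedV_sub (n : ℕ) (v w : Fin (n + 1) → ℂ) :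
    embedV n (v - w) = embedV n v - embedV n w := by
  rw [embedV, embedV, embedV, ← Finset.sum_sub_distrib]
  apply Finset.sum_congr rfl
  intro i _
  rw [Pi.sub_apply, sub_smul]

/-- Assume `0 ∉ closure Θ(B)` and let `d = inf_{‖f‖=1}|⟨Bf,f⟩|`.  Then for each `z` with
`dist(z, W(A,B)) > 0` the operator `z B - A` is boundedly invertible with
`‖(zB - A)⁻¹‖ ≤ 1/(d · dist(z, W(A,B)))`, and the truncated resolvents converge strongly:
for every `η ∈ ℓ²`, `(z B_{[0:n]} - A_{[0:n]})⁻¹ η → (zB - A)⁻¹ η` as `n → ∞`, the finite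
sections being regarded as operators on `ℓ²` in the natural way (the inverse finite matrix
acts on the first `n+1` coordinates of `η`, the result being embedded back in `ℓ²`). -/
theorem stmt_12 (A B : ellTwo →L[ℂ] ellTwo) (d : ℝ)
    (hΘ : (0 : ℂ) ∉ closure
      {w : ℂ | ∃ f : ellTwo, ‖f‖ = 1 ∧ w = (inner ℂ (B f) f : ℂ)})
    (hd : IsGLB {r : ℝ | ∃ f : ellTwo, ‖f‖ = 1 ∧ r = ‖(inner ℂ (B f) f : ℂ)‖} d)
    (z : ℂ) (hz : 0 < Metric.infDist z (numericalRange A B)) :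
    ∃ R : ellTwo →L[ℂ] ellTwo,
      (∀ x, R ((z • B - A) x) = x) ∧
      (∀ x, (z • B - A) (R x) = x) ∧
      ‖R‖ ≤ 1 / (d * Metric.infDist z (numericalRange A B)) ∧
      ∀ η : ellTwo,
        Tendsto (fun n : ℕ =>
            ∑ j : Fin (n + 1),
              ((finiteSection A B z n)⁻¹ *ᵥ (fun i : Fin (n + 1) => η (i : ℕ))) j •
                stdBasis (j : ℕ))
          atTop (nhds (R η)) := by
  -- positivity of d
  set Θ := {w : ℂ | ∃ f : ellTwo, ‖f‖ = 1 ∧ w = (inner ℂ (B f) f : ℂ)} with hΘdef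
  have hne : Θ.Nonempty := ⟨inner ℂ (B (eb 0)) (eb 0), eb 0, orthonormal_eb.1 0, rfl⟩
  have hδpos : 0 < Metric.infDist 0 Θ := by
    rcases lt_or_eq_of_le (Metric.infDist_nonneg (s := Θ) (x := (0:ℂ))) with h | h
    · exact h
    · exact absurd ((Metric.mem_closure_iff_infDist_zero hne).mpr h.symm) hΘ
  have hdpos : 0 < d := by
    have hlb : Metric.infDist 0 Θ ∈
        lowerBounds {r : ℝ | ∃ f : ellTwo, ‖f‖ = 1 ∧ r = ‖(inner ℂ (B f) f : ℂ)‖} := by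
      rintro r ⟨f, hf, rfl⟩
      have hw : (inner ℂ (B f) f : ℂ) ∈ Θ := ⟨f, hf, rfl⟩
      calc Metric.infDist 0 Θ ≤ dist 0 (inner ℂ (B f) f : ℂ) := Metric.infDist_le_dist_of_mem hw
        _ = ‖(inner ℂ (B f) f : ℂ)‖ := dist_zero_left _
    exact lt_of_lt_of_le hδpos (hd.2 hlb)
  set c : ℝ := d * Metric.infDist z (numericalRange A B) with hc
  have hcpos : 0 < c := mul_pos hdpos hz
  obtain ⟨R, hR1, hR2, hR3, hRb⟩ := exists_R A B hd.1 hdpos z hz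
  refine ⟨R, hR1, hR2, hR3, ?_⟩
  intro η
  set x : ellTwo := R η with hx
  show Tendsto (fun n : ℕ =>
      embedV n ((finiteSection A B z n)⁻¹ *ᵥ fun i : Fin (n + 1) => η (i : ℕ)))
    atTop (nhds x)
  -- truncations of x converge to x
  have hxconv : Tendsto (fun m : ℕ => embedV m (fun i : Fin (m + 1) => x (i : ℕ)))
      atTop (nhds x) := by
    have h1 := (hasSum_eb x).tendsto_sum_nat
    have h2 : Tendsto (fun m : ℕ => ∑ i ∈ Finset.range (m + 1), (x i) • eb i)
        atTop (nhds x) := h1.comp (tendsto_add_atTop_nat 1)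
    convert h2 using 2 with m
    rw [embedV, ← Finset.sum_range fun i => (x i) • eb i]
  have hTx : (z • B - A) x = η := hR2 η
  have hηconv : Tendsto
      (fun m : ℕ => (z • B - A) (embedV m (fun i : Fin (m + 1) => x (i : ℕ))))
      atTop (nhds η) := by
    have h := ((z • B - A).continuous.tendsto x).comp hxconv
    rw [hTx] at h
    exact h
  rw [Metric.tendsto_atTop]
  intro ε hε
  obtain ⟨N₁, hN₁⟩ := Metric.tendsto_atTop.mp hxconv (ε / 2) (by positivity)
  obtain ⟨N₂, hN₂⟩ := Metric.tendsto_atTop.mp hηconv (c * (ε / 2)) (by positivity)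
  set m : ℕ := max N₁ N₂ with hm
  refine ⟨m, fun n hn => ?_⟩
  set ψ : ellTwo := embedV m (fun i : Fin (m + 1) => x (i : ℕ)) with hψ
  set ηm : ellTwo := (z • B - A) ψ with hηm
  have hψtrunc : embedV n (fun i : Fin (n + 1) => ψ (i : ℕ)) = ψ :=
    trunc_embedV m _ hn
  have hexact :
      embedV n ((finiteSection A B z n)⁻¹ *ᵥ fun i : Fin (n + 1) => ηm (i : ℕ)) = ψ :=
    section_exact A B hd.1 hdpos z hz n ψ hψtrunc
  have hd1 : dist ψ x < ε / 2 := hN₁ m (le_max_left _ _)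
  have hd2 : dist ηm η < c * (ε / 2) := hN₂ m (le_max_right _ _)
  have hlin :
      embedV n ((finiteSection A B z n)⁻¹ *ᵥ fun i : Fin (n + 1) => η (i : ℕ)) -
        embedV n ((finiteSection A B z n)⁻¹ *ᵥ fun i : Fin (n + 1) => ηm (i : ℕ)) =
      embedV n ((finiteSection A B z n)⁻¹ *ᵥ fun i : Fin (n + 1) => (η - ηm) (i : ℕ)) := by
    rw [← embedV_sub, ← Matrix.mulVec_sub]
    congr 1
  have hbound :
      ‖embedV n ((finiteSection A B z n)⁻¹ *ᵥ fun i : Fin (n + 1) => (η - ηm) (i : ℕ))‖ ≤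
        1 / c * ‖η - ηm‖ := by
    calc ‖embedV n ((finiteSection A B z n)⁻¹ *ᵥ fun i : Fin (n + 1) => (η - ηm) (i : ℕ))‖
        ≤ 1 / c * ‖embedV n (fun i : Fin (n + 1) => (η - ηm) (i : ℕ))‖ :=
          inv_bound A B hd.1 hdpos z hz n _
      _ ≤ 1 / c * ‖η - ηm‖ := by
          apply mul_le_mul_of_nonneg_left (bessel_embedV n (η - ηm)) (by positivity)
  calc dist (embedV n ((finiteSection A B z n)⁻¹ *ᵥ fun i : Fin (n + 1) => η (i : ℕ))) x
      ≤ dist (embedV n ((finiteSection A B z n)⁻¹ *ᵥ fun i : Fin (n + 1) => η (i : ℕ)))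
          (embedV n ((finiteSection A B z n)⁻¹ *ᵥ fun i : Fin (n + 1) => ηm (i : ℕ))) +
        dist (embedV n ((finiteSection A B z n)⁻¹ *ᵥ fun i : Fin (n + 1) => ηm (i : ℕ))) x :=
        dist_triangle _ _ _
    _ < ε / 2 + ε / 2 := by
        apply add_lt_add_of_le_of_lt
        · rw [dist_eq_norm, hlin]
          calc ‖embedV n ((finiteSection A B z n)⁻¹ *ᵥ fun i : Fin (n + 1) => (η - ηm) (i : ℕ))‖
              ≤ 1 / c * ‖η - ηm‖ := hbound
            _ ≤ 1 / c * (c * (ε / 2)) := by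
                apply mul_le_mul_of_nonneg_left _ (by positivity)
                have hrw : ‖η - ηm‖ = dist ηm η := by rw [dist_comm, dist_eq_norm]
                rw [hrw]
                exact hd2.le
            _ = ε / 2 := by field_simp
        · rw [hexact]
          exact hd1
    _ = ε := by ring


end
end

section
/- For the tridiagonal pencil zB − A with bounded A, B, the functions u_n(z) = q_n(z)/q_{n+1}(z) satisfy, for x, y in any compact subset K of the resolvent set ρ(A,B), the identity α_n^L(x) q_{n+1}^L(x) q_n^R(y) − α_n^R(y) q_n^L(x) q_{n+1}^R(y) = (x − y) · q^L_{[0:n]}(x) B q^R_{[0:n]}(y), where q^L_{[0:n]}, q^R_{[0:n]} denote the truncated row/column vectors of scaled denominators. -/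
open Finset

/-- For the tridiagonal pencil `z B - A` (with `(n,n)` entry `β n (z) = z*B n n - A n n`,
`(n+1,n)` entry `-αL n (z) = z*B (n+1) n - A (n+1) n` and `(n,n+1)` entry
`-αR n (z) = z*B n (n+1) - A n (n+1)`), the scaled denominators satisfy, for any two points
`x`, `y` (in particular for `x, y` in a compact subset of the resolvent set, where they are
defined), the identity
`αL n (x) qᴸ (n+1) (x) qᴿ n (y) - αR n (y) qᴸ n (x) qᴿ (n+1) (y)
  = (x - y) · qᴸ_{[0:n]}(x) B qᴿ_{[0:n]}(y)`. -/
theorem stmt_13 (Am Bm : ℕ → ℕ → ℂ)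
    (htriA : ∀ j k, j ≠ k → j ≠ k + 1 → k ≠ j + 1 → Am j k = 0)
    (htriB : ∀ j k, j ≠ k → j ≠ k + 1 → k ≠ j + 1 → Bm j k = 0)
    (β : ℂ → ℕ → ℂ) (aL aR : ℂ → ℕ → ℂ)
    (hβ : ∀ z n, β z n = z * Bm n n - Am n n)
    (haL : ∀ z n, aL z n = -(z * Bm (n + 1) n - Am (n + 1) n))
    (haR : ∀ z n, aR z n = -(z * Bm n (n + 1) - Am n (n + 1)))
    (x y : ℂ) (qLx qRy : ℕ → ℂ)
    (hqL0 : qLx 0 = 1)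
    (hqL1 : aL x 0 * qLx 1 - β x 0 * qLx 0 = 0)
    (hqLrec : ∀ n, aL x (n + 1) * qLx (n + 2) - β x (n + 1) * qLx (n + 1) +
      aR x n * qLx n = 0)
    (hqR0 : qRy 0 = 1)
    (hqR1 : aR y 0 * qRy 1 - β y 0 * qRy 0 = 0)
    (hqRrec : ∀ n, aR y (n + 1) * qRy (n + 2) - β y (n + 1) * qRy (n + 1) +
      aL y n * qRy n = 0) :
    ∀ n : ℕ,
      aL x n * qLx (n + 1) * qRy n - aR y n * qLx n * qRy (n + 1) =
        (x - y) *
          ∑ i ∈ range (n + 1), ∑ k ∈ range (n + 1), qLx i * Bm i k * qRy k := by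
  intro n
  induction n with
  | zero =>
    simp only [zero_add, range_one, sum_singleton, hβ, haL, haR] at hqL1 hqR1 ⊢
    linear_combination qRy 0 * hqL1 - qLx 0 * hqR1
  | succ n ih =>
    have h1 := hqLrec n
    have h2 := hqRrec n
    have e1 : ∑ i ∈ range (n + 1), qLx i * Bm i (n + 1) * qRy (n + 1)
        = qLx n * Bm n (n + 1) * qRy (n + 1) := by
      rw [Finset.sum_range_succ]
      rw [Finset.sum_eq_zero, zero_add]
      intro i hi
      rw [Finset.mem_range] at hi
      rw [htriB i (n + 1) (by omega) (by omega) (by omega)]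
      ring
    have e2 : ∑ k ∈ range (n + 1), qLx (n + 1) * Bm (n + 1) k * qRy k
        = qLx (n + 1) * Bm (n + 1) n * qRy n := by
      rw [Finset.sum_range_succ]
      rw [Finset.sum_eq_zero, zero_add]
      intro k hk
      rw [Finset.mem_range] at hk
      rw [htriB (n + 1) k (by omega) (by omega) (by omega)]
      ring
    have hsum : ∑ i ∈ range (n + 2), ∑ k ∈ range (n + 2), qLx i * Bm i k * qRy k
        = (∑ i ∈ range (n + 1), ∑ k ∈ range (n + 1), qLx i * Bm i k * qRy k)
          + qLx n * Bm n (n + 1) * qRy (n + 1)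
          + (qLx (n + 1) * Bm (n + 1) n * qRy n
            + qLx (n + 1) * Bm (n + 1) (n + 1) * qRy (n + 1)) := by
      rw [Finset.sum_range_succ]
      have : ∀ i ∈ range (n + 1),
          ∑ k ∈ range (n + 2), qLx i * Bm i k * qRy k
          = (∑ k ∈ range (n + 1), qLx i * Bm i k * qRy k)
            + qLx i * Bm i (n + 1) * qRy (n + 1) := by
        intro i _
        rw [Finset.sum_range_succ]
      have e3 : ∑ k ∈ range (n + 2), qLx (n + 1) * Bm (n + 1) k * qRy k
          = qLx (n + 1) * Bm (n + 1) n * qRy n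
            + qLx (n + 1) * Bm (n + 1) (n + 1) * qRy (n + 1) := by
        rw [Finset.sum_range_succ, e2]
      rw [Finset.sum_congr rfl this, Finset.sum_add_distrib, e1, e3]
    rw [hsum]
    simp only [hβ, haL, haR] at h1 h2 ih ⊢
    linear_combination ih + qRy (n + 1) * h1 - qLx (n + 1) * h2
end

section
/- Let B be the infinite real symmetric tridiagonal matrix with diagonal entries B_{j,j} ≥ 1 satisfying B_{j,j} = 1 + B_{j+1,j}² where B_{j+1,j} = B_{j,j+1} > 0 are the off-diagonal entries, and assume B is bounded on ℓ². Then for every y = (y_0, y_1, …) ∈ ℓ² with y_0 = ⋯ = y_{k-1} = 0, one has ⟨By, y⟩ ≥ |y_k|². In particular B is positive semidefinite and ⟨By, y⟩ ≥ |y_0|² for all y. -/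
noncomputable section

private lemma normsq_c (z : ℂ) : ‖z‖ ^ 2 = z.re ^ 2 + z.im ^ 2 := by
  rw [Complex.sq_norm, Complex.normSq_apply]; ring

private lemma cre (b0 b : ℝ) (t u v : ℂ) :
    ((starRingEnd ℂ) ((b0 : ℂ) * t + (1 + (b : ℂ) ^ 2) * u + (b : ℂ) * v) * u).re
      = ‖u‖ ^ 2 + (b ^ 2 * ‖u‖ ^ 2 + b * ((starRingEnd ℂ) u * v).re)
        + b0 * ((starRingEnd ℂ) t * u).re := by
  simp only [normsq_c, ← Complex.ofReal_pow, map_add, map_mul, map_one, Complex.conj_ofReal,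
    Complex.add_re, Complex.mul_re, Complex.mul_im, Complex.conj_re, Complex.conj_im,
    Complex.ofReal_re, Complex.ofReal_im, Complex.one_re, Complex.one_im, Complex.add_im]
  ring

private lemma cnorm (b : ℝ) (u v : ℂ) :
    ‖(b : ℂ) * u + v‖ ^ 2
      = b ^ 2 * ‖u‖ ^ 2 + ‖v‖ ^ 2 + 2 * (b * ((starRingEnd ℂ) u * v).re) := by
  simp only [normsq_c, Complex.add_re, Complex.add_im, Complex.mul_re, Complex.mul_im,
    Complex.conj_re, Complex.conj_im, Complex.ofReal_re, Complex.ofReal_im]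
  ring

private lemma key (B : ellTwo →L[ℂ] ellTwo) (bOff : ℕ → ℝ)
    (hpos : ∀ j, 0 < bOff j)
    (hact : ∀ (y : ellTwo) (j : ℕ),
      (B y) j = (if j = 0 then 0 else (bOff (j - 1) : ℂ) * y (j - 1)) +
        (1 + (bOff j : ℂ) ^ 2) * y j + (bOff j : ℂ) * y (j + 1)) (y : ellTwo) :
    Summable (fun j => ‖(bOff j : ℂ) * y j + y (j + 1)‖ ^ 2) ∧
    (inner ℂ (B y) y : ℂ).re = ‖y 0‖ ^ 2 + ∑' j, ‖(bOff j : ℂ) * y j + y (j + 1)‖ ^ 2 := by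
  -- abbreviations
  have hM : ∀ j, bOff j ^ 2 ≤ ‖B‖ := by
    intro j
    have hej : (lp.single (E := fun _ : ℕ => ℂ) 2 j (1 : ℂ) : ellTwo) j = 1 :=
      lp.single_apply_self (E := fun _ : ℕ => ℂ) 2 j (1 : ℂ)
    have h2 : (lp.single (E := fun _ : ℕ => ℂ) 2 j (1 : ℂ) : ellTwo) (j + 1) = 0 :=
      lp.single_apply_ne (E := fun _ : ℕ => ℂ) 2 j (1 : ℂ) (Nat.succ_ne_self j)
    have h1 : (B (lp.single 2 j (1 : ℂ))) j = 1 + (bOff j : ℂ) ^ 2 := by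
      rw [hact]
      rcases Nat.eq_zero_or_pos j with hj | hj
      · subst hj; rw [if_pos rfl, hej, h2]; ring
      · have h3 : (lp.single (E := fun _ : ℕ => ℂ) 2 j (1 : ℂ) : ellTwo) (j - 1) = 0 :=
          lp.single_apply_ne (E := fun _ : ℕ => ℂ) 2 j (1 : ℂ) (by omega)
        rw [if_neg (by omega), h3, hej, h2]; ring
    have h4 : ‖(B (lp.single 2 j (1 : ℂ))) j‖ ≤ ‖B (lp.single 2 j (1 : ℂ))‖ :=
      lp.norm_apply_le_norm (by norm_num) (B (lp.single 2 j (1 : ℂ))) j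
    have h5 : ‖B (lp.single 2 j (1 : ℂ))‖ ≤ ‖B‖ := by
      have hle := B.le_opNorm (lp.single 2 j (1 : ℂ))
      have hnorm : ‖(lp.single (E := fun _ : ℕ => ℂ) 2 j (1 : ℂ) : ellTwo)‖ = 1 := by
        simpa using lp.norm_single (E := fun _ : ℕ => ℂ) (p := 2) (by norm_num)
          (fun _ : ℕ => (1 : ℂ)) j
      rw [hnorm, mul_one] at hle; exact hle
    have h6 : ‖(B (lp.single 2 j (1 : ℂ))) j‖ = 1 + bOff j ^ 2 := by
      rw [h1, show (1 + (bOff j : ℂ) ^ 2) = ((1 + bOff j ^ 2 : ℝ) : ℂ) by push_cast; ring,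
        Complex.norm_real]
      exact abs_of_nonneg (by positivity)
    nlinarith [h4.trans h5]
  have sa : Summable (fun j => ‖y j‖ ^ 2) := by
    have h := (lp.summable_inner (𝕜 := ℂ) y y).map Complex.reCLM Complex.reCLM.continuous
    exact h.congr fun i => by simpa using inner_self_eq_norm_sq (𝕜 := ℂ) (y i)
  have sa' : Summable (fun j => ‖y (j + 1)‖ ^ 2) := (summable_nat_add_iff (f := fun j => ‖y j‖ ^ 2) 1).2 sa
  have sb : Summable (fun j => bOff j ^ 2 * ‖y j‖ ^ 2) := by
    refine Summable.of_nonneg_of_le (fun j => by positivity) (fun j => ?_) (sa.mul_left ‖B‖)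
    exact mul_le_mul_of_nonneg_right (hM j) (by positivity)
  have sc : Summable (fun j => bOff j * ((starRingEnd ℂ) (y j) * y (j + 1)).re) := by
    refine Summable.of_norm_bounded ((sb.add sa').div_const 2) fun j => ?_
    have h1 : |((starRingEnd ℂ) (y j) * y (j + 1)).re| ≤ ‖y j‖ * ‖y (j + 1)‖ := by
      calc |((starRingEnd ℂ) (y j) * y (j + 1)).re| ≤ ‖(starRingEnd ℂ) (y j) * y (j + 1)‖ :=
            Complex.abs_re_le_norm _
        _ = ‖y j‖ * ‖y (j + 1)‖ := by rw [norm_mul, RCLike.norm_conj]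
    have h2 := two_mul_le_add_sq (bOff j * ‖y j‖) ‖y (j + 1)‖
    have hb := (hpos j).le
    rw [Real.norm_eq_abs, abs_mul, abs_of_nonneg hb]
    have h3 : bOff j * |((starRingEnd ℂ) (y j) * y (j + 1)).re| ≤
        bOff j * (‖y j‖ * ‖y (j + 1)‖) := mul_le_mul_of_nonneg_left h1 hb
    nlinarith [h3, h2]
  have sg : Summable (fun j => if j = 0 then (0 : ℝ)
      else bOff (j - 1) * ((starRingEnd ℂ) (y (j - 1)) * y j).re) := by
    refine (summable_nat_add_iff (f := fun j => if j = 0 then (0 : ℝ)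
      else bOff (j - 1) * ((starRingEnd ℂ) (y (j - 1)) * y j).re) 1).mp (sc.congr fun n => ?_)
    simp
  have sf : Summable (fun j => ((starRingEnd ℂ) ((B y) j) * y j).re) := by
    have h := (lp.summable_inner (𝕜 := ℂ) (B y) y).map Complex.reCLM Complex.reCLM.continuous
    exact h.congr fun i => by rw [Function.comp_apply, RCLike.inner_apply, mul_comm (y i)]; rfl
  -- pointwise identities
  have hf : ∀ j, ((starRingEnd ℂ) ((B y) j) * y j).re
      = ‖y j‖ ^ 2 + (bOff j ^ 2 * ‖y j‖ ^ 2 + bOff j * ((starRingEnd ℂ) (y j) * y (j + 1)).re)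
        + (if j = 0 then (0 : ℝ)
            else bOff (j - 1) * ((starRingEnd ℂ) (y (j - 1)) * y j).re) := by
    intro j
    rw [hact]
    cases j with
    | zero => simpa using cre 0 (bOff 0) 0 (y 0) (y 1)
    | succ n =>
      simp only [if_neg (Nat.succ_ne_zero n), Nat.add_sub_cancel]
      exact cre (bOff n) (bOff (n + 1)) (y n) (y (n + 1)) (y (n + 2))
  have hh : ∀ j, ‖(bOff j : ℂ) * y j + y (j + 1)‖ ^ 2
      = bOff j ^ 2 * ‖y j‖ ^ 2 + ‖y (j + 1)‖ ^ 2
        + 2 * (bOff j * ((starRingEnd ℂ) (y j) * y (j + 1)).re) := fun j => cnorm _ _ _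
  have sh : Summable (fun j => ‖(bOff j : ℂ) * y j + y (j + 1)‖ ^ 2) := by
    refine Summable.congr (f := fun j => bOff j ^ 2 * ‖y j‖ ^ 2 + ‖y (j + 1)‖ ^ 2
      + 2 * (bOff j * ((starRingEnd ℂ) (y j) * y (j + 1)).re)) ?_ fun j => (hh j).symm
    exact (sb.add sa').add (sc.mul_left 2)
  refine ⟨sh, ?_⟩
  have hinner : (inner ℂ (B y) y : ℂ).re = ∑' j, ((starRingEnd ℂ) ((B y) j) * y j).re := by
    rw [lp.inner_eq_tsum (𝕜 := ℂ), Complex.re_tsum (lp.summable_inner _ _)]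
    exact tsum_congr fun j => by rw [RCLike.inner_apply, mul_comm (y j)]
  rw [hinner, tsum_congr hf, Summable.tsum_add (sa.add (sb.add sc)) sg, Summable.tsum_add sa (sb.add sc),
    Summable.tsum_add sb sc, tsum_congr hh, Summable.tsum_add (sb.add sa') (sc.mul_left 2), Summable.tsum_add sb sa',
    tsum_mul_left]
  have hg : (∑' j, (if j = 0 then (0 : ℝ)
      else bOff (j - 1) * ((starRingEnd ℂ) (y (j - 1)) * y j).re))
      = ∑' j, bOff j * ((starRingEnd ℂ) (y j) * y (j + 1)).re := by
    rw [Summable.tsum_eq_zero_add sg]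
    simp
  have hA : (∑' j, ‖y j‖ ^ 2) = ‖y 0‖ ^ 2 + ∑' j, ‖y (j + 1)‖ ^ 2 := Summable.tsum_eq_zero_add sa
  rw [hg, hA]; ring

/-- Let `B` be the bounded self-adjoint tridiagonal operator on `ℓ²` with off-diagonal
entries `bOff j = B (j+1) j = B j (j+1) > 0` and diagonal entries `B j j = 1 + bOff j ^ 2`
(so `(B y) j = bOff (j-1) * y (j-1) + (1 + bOff j ^ 2) * y j + bOff j * y (j+1)`).
Then for every `y ∈ ℓ²` with `y 0 = ⋯ = y (k-1) = 0` one has `⟨B y, y⟩ ≥ |y k|²`.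
In particular `B` is positive semidefinite and `⟨B y, y⟩ ≥ |y 0|²` for all `y`. -/
theorem stmt_17 (B : ellTwo →L[ℂ] ellTwo) (bOff : ℕ → ℝ)
    (hpos : ∀ j, 0 < bOff j)
    (hact : ∀ (y : ellTwo) (j : ℕ),
      (B y) j = (if j = 0 then 0 else (bOff (j - 1) : ℂ) * y (j - 1)) +
        (1 + (bOff j : ℂ) ^ 2) * y j + (bOff j : ℂ) * y (j + 1)) :
    (∀ (y : ellTwo) (k : ℕ), (∀ i < k, y i = 0) →
      ‖y k‖ ^ 2 ≤ (inner ℂ (B y) y : ℂ).re) ∧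
    (∀ y : ellTwo, 0 ≤ (inner ℂ (B y) y : ℂ).re) ∧
    (∀ y : ellTwo, ‖y 0‖ ^ 2 ≤ (inner ℂ (B y) y : ℂ).re) := by
  have main : ∀ (y : ellTwo) (k : ℕ), (∀ i < k, y i = 0) →
      ‖y k‖ ^ 2 ≤ (inner ℂ (B y) y : ℂ).re := by
    intro y k hk
    obtain ⟨sh, hid⟩ := key B bOff hpos hact y
    rw [hid]
    cases k with
    | zero =>
      have : 0 ≤ ∑' j, ‖(bOff j : ℂ) * y j + y (j + 1)‖ ^ 2 :=
        tsum_nonneg fun j => by positivity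
      linarith
    | succ n =>
      have hy0 : y 0 = 0 := hk 0 (Nat.succ_pos n)
      have hterm : ‖(bOff n : ℂ) * y n + y (n + 1)‖ ^ 2 = ‖y (n + 1)‖ ^ 2 := by
        rw [hk n (Nat.lt_succ_self n)]; simp
      have hle : ‖(bOff n : ℂ) * y n + y (n + 1)‖ ^ 2 ≤
          ∑' j, ‖(bOff j : ℂ) * y j + y (j + 1)‖ ^ 2 :=
        Summable.le_tsum sh n fun j _ => by positivity
      rw [hy0] at *
      simp only [norm_zero]
      rw [hterm] at hle
      linarith [hle]
  refine ⟨main, fun y => ?_, fun y => main y 0 (by omega)⟩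
  have := main y 0 (by omega)
  have h0 : (0 : ℝ) ≤ ‖y 0‖ ^ 2 := by positivity
  linarith

end
end

section
/- Let B be as above (tridiagonal, B_{j,j} = 1 + B_{j+1,j}², bounded) and suppose additionally B_{j+1,j} → 0 as j → ∞. Then B is a compact perturbation of the identity and 0 ∉ closure(Θ(B)); in particular B is boundedly invertible. -/
noncomputable section

open Filter

namespace Stmt18

open Set

lemma two_toReal : (2 : ENNReal).toReal = 2 := by norm_num

lemma y_summable (y : ellTwo) : Summable (fun i => ‖y i‖ ^ 2) := by
  have := lp.memℓp y
  rw [memℓp_gen_iff (by rw [two_toReal]; norm_num)] at this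
  simpa [two_toReal, Real.rpow_natCast] using this

lemma norm_sq_eq (y : ellTwo) : ‖y‖ ^ 2 = ∑' i, ‖y i‖ ^ 2 := by
  have := lp.norm_rpow_eq_tsum (p := 2) (by rw [two_toReal]; norm_num) y
  rw [two_toReal] at this
  calc ‖y‖ ^ 2 = ‖y‖ ^ (2 : ℝ) := by rw [← Real.rpow_natCast]; norm_num
  _ = ∑' i, ‖y i‖ ^ (2:ℝ) := this
  _ = _ := by
      refine tsum_congr fun i => ?_
      rw [← Real.rpow_natCast]; norm_num

variable {c : ℕ → ℝ} {σ : ℕ → ℕ} {M : ℝ}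

/-- key estimate -/
lemma wk_est (hM : ∀ j, |c j| ≤ M) (hinj : InjOn σ {j | c j ≠ 0}) (y : ellTwo) :
    Summable (fun j => ‖(c j : ℂ) * y (σ j)‖ ^ 2) ∧
      ∑' j, ‖(c j : ℂ) * y (σ j)‖ ^ 2 ≤ (M * ‖y‖) ^ 2 := by
  have hM0 : 0 ≤ M := le_trans (abs_nonneg _) (hM 0)
  set s : Set ℕ := {j | c j ≠ 0} with hs
  set h : ℕ → ℝ := fun j => ‖(c j : ℂ) * y (σ j)‖ ^ 2 with hh
  have hinj' : Function.Injective (s.restrict σ) := by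
    rwa [Set.injOn_iff_injective] at hinj
  have hg : Summable (fun i => ‖y i‖ ^ 2) := y_summable y
  have hgσ : Summable ((fun i => ‖y i‖ ^ 2) ∘ (s.restrict σ)) :=
    hg.comp_injective hinj'
  have hle : ∀ j : s, h j ≤ M ^ 2 * ‖y (σ j)‖ ^ 2 := by
    intro j
    have : ‖(c (j:ℕ) : ℂ)‖ ≤ M := by
      rw [Complex.norm_real]; exact hM _
    calc h j = ‖(c (j:ℕ) : ℂ)‖ ^ 2 * ‖y (σ j)‖ ^ 2 := by
          show ‖(c (j:ℕ) : ℂ) * y (σ (j:ℕ))‖ ^ 2 = _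
          rw [norm_mul, mul_pow]
    _ ≤ M ^ 2 * ‖y (σ j)‖ ^ 2 := by gcongr
  have hsubs : Function.support h ⊆ s := by
    intro j hj
    simp only [Function.mem_support, hh] at hj
    by_contra hc
    simp only [hs, mem_setOf_eq, not_not] at hc
    exact hj (by simp [hc])
  have hsum_s : Summable (fun j : s => h j) := by
    apply Summable.of_nonneg_of_le (fun j => by positivity) hle
    exact (hgσ.mul_left (M ^ 2))
  have hsum : Summable h := by
    rw [← summable_subtype_and_compl]
    constructor
    · exact hsum_s
    · have hz : ∀ j : (sᶜ : Set ℕ), h j = 0 := by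
        intro j
        by_contra hj
        exact j.2 (hsubs hj)
      exact summable_zero.congr fun j => (hz j).symm
  refine ⟨hsum, ?_⟩
  have h1 : ∑' j, h j = ∑' j : s, h j := (tsum_subtype_eq_of_support_subset hsubs).symm
  rw [h1]
  calc ∑' j : s, h j ≤ ∑' j : s, M ^ 2 * ‖y (σ j)‖ ^ 2 :=
        Summable.tsum_le_tsum hle hsum_s (hgσ.mul_left _)
  _ = M ^ 2 * ∑' j : s, ‖y (σ (j:ℕ))‖ ^ 2 := tsum_mul_left
  _ ≤ M ^ 2 * ∑' i, ‖y i‖ ^ 2 := by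
      gcongr
      refine Summable.tsum_le_tsum_of_inj (s.restrict σ) hinj' (fun i _ => by positivity)
        (fun j => le_refl _) hgσ hg
  _ = (M * ‖y‖) ^ 2 := by rw [← norm_sq_eq]; ring

section
variable {c : ℕ → ℝ} {σ : ℕ → ℕ} {M : ℝ}

lemma wk_mem (hM : ∀ j, |c j| ≤ M) (hinj : InjOn σ {j | c j ≠ 0}) (y : ellTwo) :
    Memℓp (fun j => (c j : ℂ) * y (σ j)) 2 := by
  apply memℓp_gen
  have := (wk_est hM hinj y).1
  apply this.congr
  intro j
  rw [two_toReal, ← Real.rpow_natCast]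
  norm_num

/-- The weighted reindexing operator. -/
def wk (c : ℕ → ℝ) (σ : ℕ → ℕ) (hM : ∀ j, |c j| ≤ M) (hinj : InjOn σ {j | c j ≠ 0}) :
    ellTwo →L[ℂ] ellTwo :=
  LinearMap.mkContinuous
    { toFun := fun y => (⟨fun j => (c j : ℂ) * y (σ j), wk_mem hM hinj y⟩ : ellTwo)
      map_add' := by
        intro x y
        apply lp.ext
        funext j
        show (c j : ℂ) * (x + y) (σ j) = _
        rw [lp.coeFn_add]
        show (c j : ℂ) * (x (σ j) + y (σ j)) =
          ((⟨_, wk_mem hM hinj x⟩ : ellTwo) + ⟨_, wk_mem hM hinj y⟩ : ellTwo) j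
        rw [lp.coeFn_add]
        show _ = (c j : ℂ) * x (σ j) + (c j : ℂ) * y (σ j)
        ring
      map_smul' := by
        intro a x
        apply lp.ext
        funext j
        show (c j : ℂ) * (a • x) (σ j) = (a • (⟨_, wk_mem hM hinj x⟩ : ellTwo)) j
        rw [lp.coeFn_smul, lp.coeFn_smul]
        show (c j : ℂ) * (a * x (σ j)) = a * ((c j : ℂ) * x (σ j))
        ring } M
    (by
      intro y
      have hM0 : 0 ≤ M := le_trans (abs_nonneg _) (hM 0)
      have h2 := (wk_est hM hinj y).2
      set w : ellTwo := ⟨fun j => (c j : ℂ) * y (σ j), wk_mem hM hinj y⟩ with hw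
      have hnorm : ‖w‖ ^ 2 = ∑' j, ‖(c j : ℂ) * y (σ j)‖ ^ 2 := norm_sq_eq w
      have : ‖w‖ ^ 2 ≤ (M * ‖y‖) ^ 2 := by rw [hnorm]; exact h2
      have hle : ‖w‖ ≤ M * ‖y‖ := by
        have h1 : (0:ℝ) ≤ ‖w‖ := norm_nonneg _
        have h2' : (0:ℝ) ≤ M * ‖y‖ := by positivity
        nlinarith
      exact hle)

@[simp] lemma wk_apply (hM : ∀ j, |c j| ≤ M) (hinj : InjOn σ {j | c j ≠ 0}) (y : ellTwo)
    (j : ℕ) : (wk c σ hM hinj y) j = (c j : ℂ) * y (σ j) := rfl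

lemma wk_norm_le (hM : ∀ j, |c j| ≤ M) (hinj : InjOn σ {j | c j ≠ 0}) :
    ‖wk c σ hM hinj‖ ≤ M :=
  LinearMap.mkContinuous_norm_le _ (le_trans (abs_nonneg _) (hM 0)) _

end
/-- coordinate evaluation as CLM -/
def coordCLM (i : ℕ) : ellTwo →L[ℂ] ℂ :=
  LinearMap.mkContinuous
    { toFun := fun y => y i
      map_add' := by intro x y; exact congrFun (lp.coeFn_add x y) i
      map_smul' := by intro a x; exact congrFun (lp.coeFn_smul a x) i } 1
    (by
      intro y
      rw [one_mul]
      exact lp.norm_apply_le_norm (by norm_num) y i)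

@[simp] lemma coordCLM_apply (i : ℕ) (y : ellTwo) : coordCLM i y = y i := rfl

lemma isCompactOperator_smulRight (φ : ellTwo →L[ℂ] ℂ) (v : ellTwo) :
    IsCompactOperator ⇑(φ.smulRight v) := by
  have h1 : IsCompactOperator (fun z : ℂ => z • v) := by
    refine ⟨(fun z : ℂ => z • v) '' Metric.closedBall 0 1,
      (isCompact_closedBall 0 1).image (by continuity), ?_⟩
    exact Filter.mem_of_superset (Metric.closedBall_mem_nhds 0 one_pos)
      (Set.subset_preimage_image _ _)
  have : ⇑(φ.smulRight v) = (fun z : ℂ => z • v) ∘ ⇑φ := by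
    funext y; rfl
  rw [this]
  exact h1.comp_clm φ

lemma isCompactOperator_sum {s : Finset ℕ} {f : ℕ → ellTwo →L[ℂ] ellTwo}
    (hf : ∀ i ∈ s, IsCompactOperator ⇑(f i)) :
    IsCompactOperator ⇑(∑ i ∈ s, f i) := by
  classical
  induction s using Finset.induction_on with
  | empty => simpa using isCompactOperator_zero
  | insert a s hx ih =>
    rw [Finset.sum_insert hx]
    have : ⇑(f a + ∑ i ∈ s, f i) = ⇑(f a) + ⇑(∑ i ∈ s, f i) := rfl
    rw [this]
    exact (hf a (Finset.mem_insert_self a s)).add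
      (ih fun i hi => hf i (Finset.mem_insert_of_mem hi))

variable {c : ℕ → ℝ} {σ : ℕ → ℕ} {M : ℝ}

lemma wk_compact (hM : ∀ j, |c j| ≤ M) (hinj : InjOn σ {j | c j ≠ 0})
    (hc : Tendsto c atTop (nhds 0)) : IsCompactOperator ⇑(wk c σ hM hinj) := by
  suffices h : (wk c σ hM hinj) ∈
      closure {f : ellTwo →L[ℂ] ellTwo | IsCompactOperator ⇑f} by
    exact isClosed_setOf_isCompactOperator.closure_subset h
  rw [Metric.mem_closure_iff]
  intro ε hε
  obtain ⟨N, hN⟩ : ∃ N, ∀ j ≥ N, |c j| ≤ ε / 2 := by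
    have := (Metric.tendsto_atTop.mp hc) (ε/2) (by positivity)
    obtain ⟨N, hN⟩ := this
    exact ⟨N, fun j hj => by
      have := hN j hj
      rw [Real.dist_eq, sub_zero] at this
      exact this.le⟩
  -- truncated coefficients
  set cN : ℕ → ℝ := fun j => if j < N then c j else 0 with hcN
  set ctail : ℕ → ℝ := fun j => if j < N then 0 else c j with hct
  have hMN : ∀ j, |cN j| ≤ M := fun j => by
    by_cases h : j < N <;> simp [hcN, h]
    · exact hM j
    · exact le_trans (abs_nonneg _) (hM 0)
  have hMt : ∀ j, |ctail j| ≤ ε / 2 := fun j => by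
    by_cases h : j < N <;> simp [hct, h]
    · positivity
    · exact hN j (by omega)
  have hinjN : InjOn σ {j | cN j ≠ 0} := hinj.mono (by
    intro j hj
    simp only [hcN, Set.mem_setOf_eq] at hj ⊢
    by_cases h : j < N
    · simpa [h] using hj
    · simp [h] at hj)
  have hinjt : InjOn σ {j | ctail j ≠ 0} := hinj.mono (by
    intro j hj
    simp only [hct, Set.mem_setOf_eq] at hj ⊢
    by_cases h : j < N
    · simp [h] at hj
    · simpa [h] using hj)
  refine ⟨wk cN σ hMN hinjN, ?_, ?_⟩
  · -- finite rank, hence compact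
    show IsCompactOperator _
    have heq : wk cN σ hMN hinjN =
        ∑ j ∈ Finset.range N, ((cN j : ℂ) • coordCLM (σ j)).smulRight (lp.single 2 j 1) := by
      ext y k
      rw [ContinuousLinearMap.sum_apply]
      have hcoord : ∀ (g : ℕ → ellTwo →L[ℂ] ellTwo) (s : Finset ℕ),
          ((∑ j ∈ s, g j y : ellTwo) : ℕ → ℂ) k = ∑ j ∈ s, (g j y) k := by
        intro g s
        exact map_sum (coordCLM k) (fun j => g j y) s
      rw [hcoord]
      have : ∀ j ∈ Finset.range N,
          ((((cN j : ℂ) • coordCLM (σ j)).smulRight (lp.single 2 j 1)) y : ellTwo) k =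
            if k = j then (cN j : ℂ) * y (σ j) else 0 := by
        intro j hj
        rw [ContinuousLinearMap.smulRight_apply, ContinuousLinearMap.smul_apply,
          coordCLM_apply]
        have : (((cN j : ℂ) • y (σ j)) • (lp.single 2 j (1:ℂ)) : ellTwo) k
            = ((cN j : ℂ) • y (σ j)) • ((lp.single 2 j (1:ℂ) : ellTwo) k) :=
          congrFun (lp.coeFn_smul _ _) k
        rw [this]
        by_cases h : k = j
        · subst h; rw [lp.single_apply_self]; simp
        · rw [lp.single_apply_ne 2 j _ h]; simp [h]
      rw [Finset.sum_congr rfl this]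
      rw [wk_apply]
      rw [Finset.sum_ite_eq (Finset.range N) k (fun j => (cN j : ℂ) * y (σ j))]
      by_cases hk : k < N
      · simp [Finset.mem_range.mpr hk]
      · simp only [Finset.mem_range]
        rw [if_neg hk]
        simp [hcN, hk]
    rw [heq]
    exact isCompactOperator_sum fun j _ => isCompactOperator_smulRight _ _
  · -- distance small
    have hdiff : wk c σ hM hinj - wk cN σ hMN hinjN = wk ctail σ hMt hinjt := by
      ext y k
      show (wk c σ hM hinj y - wk cN σ hMN hinjN y : ellTwo) k = _
      rw [lp.coeFn_sub]
      show (c k : ℂ) * y (σ k) - (cN k : ℂ) * y (σ k) = (ctail k : ℂ) * y (σ k)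
      by_cases h : k < N <;> simp [hcN, hct, h] <;> ring
    rw [dist_eq_norm, hdiff]
    calc ‖wk ctail σ hMt hinjt‖ ≤ ε / 2 := wk_norm_le hMt hinjt
    _ < ε := by linarith
/-! ### The conjugating diagonal sequence -/

def dseq (b : ℕ → ℝ) : ℕ → ℝ
  | 0 => 1
  | (j+1) => max 1 (2 * b j * dseq b j)

lemma dseq_one_le (b : ℕ → ℝ) : ∀ j, 1 ≤ dseq b j
  | 0 => le_refl 1
  | (j+1) => le_max_left _ _

lemma dseq_pos (b : ℕ → ℝ) (j : ℕ) : 0 < dseq b j :=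
  lt_of_lt_of_le one_pos (dseq_one_le b j)

lemma dseq_ge (b : ℕ → ℝ) (j : ℕ) : 2 * b j * dseq b j ≤ dseq b (j+1) :=
  le_max_right _ _

lemma bdd_of_tendsto {f : ℕ → ℝ} (h : Tendsto f atTop (nhds 0)) :
    ∃ M, 0 ≤ M ∧ ∀ j, |f j| ≤ M := by
  obtain ⟨N, hN⟩ := (Metric.tendsto_atTop.mp h) 1 one_pos
  have hne : (Finset.range (N + 1)).Nonempty := Finset.nonempty_range_iff.mpr (Nat.succ_ne_zero N)
  set M : ℝ := max 1 ((Finset.range (N + 1)).sup' hne fun j => |f j|) with hM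
  refine ⟨M, le_trans zero_le_one (le_max_left _ _), fun j => ?_⟩
  by_cases hj : j < N + 1
  · exact le_trans (Finset.le_sup' (fun j => |f j|) (Finset.mem_range.mpr hj)) (le_max_right _ _)
  · have := hN j (by omega)
    rw [Real.dist_eq, sub_zero] at this
    exact le_trans this.le (le_max_left _ _)

lemma dseq_bdd {b : ℕ → ℝ} (h : Tendsto b atTop (nhds 0)) :
    ∃ C, ∀ j, dseq b j ≤ C := by
  obtain ⟨N, hN⟩ := (Metric.tendsto_atTop.mp h) (1/2) (by norm_num)
  have hN' : ∀ j ≥ N, 2 * b j ≤ 1 := by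
    intro j hj
    have := hN j hj
    rw [Real.dist_eq, sub_zero] at this
    have := (abs_lt.mp this).2
    linarith
  have hstep : ∀ k, dseq b (N + k) ≤ dseq b N := by
    intro k
    induction k with
    | zero => exact le_refl _
    | succ k ih =>
      have h1 : dseq b (N + (k+1)) = max 1 (2 * b (N + k) * dseq b (N + k)) := rfl
      rw [h1]
      apply max_le (le_trans (dseq_one_le b N) (le_refl _))
      calc 2 * b (N + k) * dseq b (N + k) ≤ 1 * dseq b (N + k) := by
            apply mul_le_mul_of_nonneg_right (hN' _ (by omega)) (dseq_pos b _).le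
      _ = dseq b (N + k) := one_mul _
      _ ≤ dseq b N := ih
  have hne : (Finset.range (N + 1)).Nonempty := Finset.nonempty_range_iff.mpr (Nat.succ_ne_zero N)
  refine ⟨(Finset.range (N + 1)).sup' hne (dseq b), fun j => ?_⟩
  by_cases hj : j < N + 1
  · exact Finset.le_sup' (dseq b) (Finset.mem_range.mpr hj)
  · have : j = N + (j - N) := by omega
    rw [this]
    exact le_trans (hstep _)
      (Finset.le_sup' (dseq b) (Finset.mem_range.mpr (by omega)))

/-! ### Coefficient functions -/

def cS (b : ℕ → ℝ) (j : ℕ) : ℝ := if j = 0 then 0 else b (j - 1)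

def cS' (b : ℕ → ℝ) (j : ℕ) : ℝ :=
  if j = 0 then 0 else b (j - 1) * dseq b (j - 1) / dseq b j

def cT' (b : ℕ → ℝ) (j : ℕ) : ℝ := b j * dseq b j / dseq b (j + 1)

lemma cS'_bound {b : ℕ → ℝ} (hb : ∀ j, 0 ≤ b j) (j : ℕ) : |cS' b j| ≤ 1/2 := by
  rcases j with _ | k
  · simp [cS']
  · have hd1 := dseq_pos b k
    have hd2 := dseq_pos b (k+1)
    have hge := dseq_ge b k
    have hnum : 0 ≤ b k * dseq b k := mul_nonneg (hb k) hd1.le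
    have : cS' b (k+1) = b k * dseq b k / dseq b (k+1) := by simp [cS']
    rw [this, abs_of_nonneg (div_nonneg hnum hd2.le), div_le_iff₀ hd2]
    linarith

lemma cT'_bound {b : ℕ → ℝ} (hb : ∀ j, 0 ≤ b j) (j : ℕ) : |cT' b j| ≤ 1/2 := by
  have hd1 := dseq_pos b j
  have hd2 := dseq_pos b (j+1)
  have hge := dseq_ge b j
  have hnum : 0 ≤ b j * dseq b j := mul_nonneg (hb j) hd1.le
  rw [cT', abs_of_nonneg (div_nonneg hnum hd2.le), div_le_iff₀ hd2]
  linarith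

lemma injOn_pred {c : ℕ → ℝ} (h0 : c 0 = 0) :
    InjOn (fun j => j - 1) {j | c j ≠ 0} := by
  intro a ha b hb hab
  simp only [Set.mem_setOf_eq] at ha hb
  have ha0 : a ≠ 0 := fun h => ha (h ▸ h0)
  have hb0 : b ≠ 0 := fun h => hb (h ▸ h0)
  simp only at hab
  omega

lemma injOn_succ (c : ℕ → ℝ) : InjOn (fun j => j + 1) {j | c j ≠ 0} := by
  intro a _ b _ hab
  simpa using hab

lemma injOn_id' (c : ℕ → ℝ) : InjOn (fun j : ℕ => j) {j | c j ≠ 0} :=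
  fun a _ b _ hab => hab
lemma lp_add_apply (z w : ellTwo) (k : ℕ) : (z + w : ellTwo) k = z k + w k :=
  congrFun (lp.coeFn_add z w) k

end Stmt18


open Stmt18 in
/-- Let `B` be the bounded tridiagonal operator on `ℓ²` with positive off-diagonal entries
`bOff j = B (j+1) j = B j (j+1)` tending to `0` and diagonal entries `1 + bOff j ^ 2`.
Then `B` is a compact perturbation of the identity, `0` is not in the closure of the
numerical range `Θ(B)`, and in particular `B` is boundedly invertible. -/
theorem stmt_18 (B : ellTwo →L[ℂ] ellTwo) (bOff : ℕ → ℝ)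
    (hpos : ∀ j, 0 < bOff j)
    (hlim : Tendsto bOff atTop (nhds 0))
    (hact : ∀ (y : ellTwo) (j : ℕ),
      (B y) j = (if j = 0 then 0 else (bOff (j - 1) : ℂ) * y (j - 1)) +
        (1 + (bOff j : ℂ) ^ 2) * y j + (bOff j : ℂ) * y (j + 1)) :
    IsCompactOperator (⇑(B - ContinuousLinearMap.id ℂ ellTwo)) ∧
    (0 : ℂ) ∉ closure {w : ℂ | ∃ y : ellTwo, ‖y‖ = 1 ∧ w = (inner ℂ (B y) y : ℂ)} ∧
    ∃ Binv : ellTwo →L[ℂ] ellTwo,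
      Binv.comp B = ContinuousLinearMap.id ℂ ellTwo ∧
      B.comp Binv = ContinuousLinearMap.id ℂ ellTwo := by
  classical
  have hb0 : ∀ j, 0 ≤ bOff j := fun j => (hpos j).le
  obtain ⟨Mb, hMb0, hMb⟩ := bdd_of_tendsto hlim
  have hMS : ∀ j, |cS bOff j| ≤ Mb := by
    intro j; rcases j with _ | k
    · simpa [cS] using hMb0
    · simpa [cS] using hMb k
  obtain ⟨Cd, hCd⟩ := dseq_bdd hlim
  have hMd : ∀ j, |dseq bOff j| ≤ Cd := fun j => by
    rw [abs_of_pos (dseq_pos bOff j)]; exact hCd j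
  have hMdi : ∀ j, |(dseq bOff j)⁻¹| ≤ 1 := fun j => by
    rw [abs_of_pos (inv_pos.mpr (dseq_pos bOff j))]
    exact inv_le_one_of_one_le₀ (dseq_one_le bOff j)
  have hcS0 : cS bOff 0 = 0 := by simp [cS]
  have hcS'0 : cS' bOff 0 = 0 := by simp [cS']
  set S := wk (cS bOff) (fun j => j - 1) hMS (injOn_pred hcS0) with hSdef
  set T := wk bOff (fun j => j + 1) hMb (injOn_succ _) with hTdef
  set D := wk (dseq bOff) (fun j => j) hMd (injOn_id' _) with hDdef
  set Di := wk (fun j => (dseq bOff j)⁻¹) (fun j => j) hMdi (injOn_id' _) with hDidef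
  set S' := wk (cS' bOff) (fun j => j - 1) (cS'_bound hb0) (injOn_pred hcS'0) with hS'def
  set T' := wk (cT' bOff) (fun j => j + 1) (cT'_bound hb0) (injOn_succ _) with hT'def
  have hdne : ∀ j, dseq bOff j ≠ 0 := fun j => (dseq_pos bOff j).ne'
  -- D and Di are inverse
  have hDDi : D * Di = 1 := by
    ext y k
    rw [ContinuousLinearMap.mul_apply, ContinuousLinearMap.one_apply, hDdef, hDidef,
      wk_apply, wk_apply]
    push_cast
    rw [← mul_assoc, mul_inv_cancel₀ (Complex.ofReal_ne_zero.mpr (hdne k)), one_mul]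
  have hDiD : Di * D = 1 := by
    ext y k
    rw [ContinuousLinearMap.mul_apply, ContinuousLinearMap.one_apply, hDdef, hDidef,
      wk_apply, wk_apply]
    push_cast
    rw [← mul_assoc, inv_mul_cancel₀ (Complex.ofReal_ne_zero.mpr (hdne k)), one_mul]
  -- conjugation identities
  have hE1 : D * (1 + S') * Di = 1 + S := by
    ext y k
    simp only [ContinuousLinearMap.mul_apply, ContinuousLinearMap.add_apply,
      ContinuousLinearMap.one_apply, hDdef, hDidef, hSdef, hS'def, lp_add_apply, wk_apply]
    rcases k with _ | m
    · simp only [cS, cS', if_pos rfl]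
      have h0 : ((dseq bOff 0 : ℝ) : ℂ) ≠ 0 := Complex.ofReal_ne_zero.mpr (hdne 0)
      push_cast
      field_simp
    · have h1 : cS bOff (m+1) = bOff m := by simp [cS]
      have h2 : cS' bOff (m+1) = bOff m * dseq bOff m / dseq bOff (m+1) := by simp [cS']
      rw [h1, h2]
      have hm : ((dseq bOff m : ℝ) : ℂ) ≠ 0 := Complex.ofReal_ne_zero.mpr (hdne m)
      have hm1 : ((dseq bOff (m+1) : ℝ) : ℂ) ≠ 0 := Complex.ofReal_ne_zero.mpr (hdne (m+1))
      push_cast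
      field_simp
  have hE2 : Di * (1 + T') * D = 1 + T := by
    ext y k
    simp only [ContinuousLinearMap.mul_apply, ContinuousLinearMap.add_apply,
      ContinuousLinearMap.one_apply, hDdef, hDidef, hTdef, hT'def, lp_add_apply, wk_apply]
    have hk : ((dseq bOff k : ℝ) : ℂ) ≠ 0 := Complex.ofReal_ne_zero.mpr (hdne k)
    have hk1 : ((dseq bOff (k+1) : ℝ) : ℂ) ≠ 0 := Complex.ofReal_ne_zero.mpr (hdne (k+1))
    rw [cT']
    push_cast
    field_simp
  have hE3 : (1 + T) * (1 + S) = B := by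
    ext y k
    simp only [ContinuousLinearMap.mul_apply, ContinuousLinearMap.add_apply,
      ContinuousLinearMap.one_apply, hSdef, hTdef, lp_add_apply, wk_apply]
    rw [hact]
    have h1 : cS bOff (k + 1) = bOff k := by simp [cS]
    rw [h1]
    rcases k with _ | m
    · simp [cS]; ring
    · have h2 : cS bOff (m+1) = bOff m := by simp [cS]
      rw [h2]
      simp only [if_neg (Nat.succ_ne_zero m)]
      push_cast
      ring
  -- adjoint identity
  have key : ∀ x y : ellTwo, (inner ℂ (T x) y : ℂ) = inner ℂ x (S y) := by
    intro x y
    rw [lp.inner_eq_tsum, lp.inner_eq_tsum]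
    have hsupp : Function.support (fun j => (inner ℂ (x j) ((S y) j) : ℂ)) ⊆
        Set.range (fun c : ℕ => c + 1) := by
      intro j hj
      rcases j with _ | m
      · exfalso
        apply hj
        show (inner ℂ (x 0) ((S y) 0) : ℂ) = 0
        rw [hSdef, wk_apply, hcS0]
        simp
      · exact ⟨m, rfl⟩
    have hinj : Function.Injective (fun c : ℕ => c + 1) := fun a b h => by simpa using h
    rw [← Function.Injective.tsum_eq hinj hsupp]
    apply tsum_congr
    intro c
    rw [RCLike.inner_apply, RCLike.inner_apply, hSdef, hTdef, wk_apply, wk_apply]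
    have h1 : cS bOff (c+1) = bOff c := by simp [cS]
    rw [h1]
    rw [map_mul, Complex.conj_ofReal]
    rw [Nat.add_sub_cancel]
    ring
  have hadj : (1 + T) = ContinuousLinearMap.adjoint (1 + S) := by
    rw [ContinuousLinearMap.eq_adjoint_iff]
    intro x y
    rw [ContinuousLinearMap.add_apply, ContinuousLinearMap.add_apply,
      ContinuousLinearMap.one_apply, ContinuousLinearMap.one_apply,
      inner_add_left, inner_add_right, key]
  -- units
  have hu1 : IsUnit (1 + S') := by
    have hn : ‖(-S' : ellTwo →L[ℂ] ellTwo)‖ < 1 := by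
      rw [norm_neg]
      have := wk_norm_le (cS'_bound hb0) (injOn_pred hcS'0)
      rw [← hS'def] at this
      linarith
    have h := isUnit_one_sub_of_norm_lt_one hn
    rwa [sub_neg_eq_add] at h
  have hu2 : IsUnit (1 + T') := by
    have hn : ‖(-T' : ellTwo →L[ℂ] ellTwo)‖ < 1 := by
      rw [norm_neg]
      have := wk_norm_le (cT'_bound hb0) (injOn_succ (cT' bOff))
      rw [← hT'def] at this
      linarith
    have h := isUnit_one_sub_of_norm_lt_one hn
    rwa [sub_neg_eq_add] at h
  have huD : IsUnit D := ⟨⟨D, Di, hDDi, hDiD⟩, rfl⟩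
  have huDi : IsUnit Di := ⟨⟨Di, D, hDiD, hDDi⟩, rfl⟩
  have huS : IsUnit (1 + S) := by rw [← hE1]; exact (huD.mul hu1).mul huDi
  have huT : IsUnit (1 + T) := by rw [← hE2]; exact (huDi.mul hu2).mul huD
  have huB : IsUnit B := by rw [← hE3]; exact huT.mul huS
  refine ⟨?_, ?_, ?_⟩
  · -- compactness
    have hcS_lim : Tendsto (cS bOff) atTop (nhds 0) := by
      rw [Metric.tendsto_atTop]
      intro ε hε
      obtain ⟨N, hN⟩ := Metric.tendsto_atTop.mp hlim ε hε
      refine ⟨N + 1, fun j hj => ?_⟩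
      have hj0 : j ≠ 0 := by omega
      have : cS bOff j = bOff (j - 1) := by simp [cS, hj0]
      rw [this]
      exact hN (j - 1) (by omega)
    have hScompact := wk_compact hMS (injOn_pred hcS0) hcS_lim
    have hTcompact := wk_compact hMb (injOn_succ _) hlim
    rw [← hSdef] at hScompact
    rw [← hTdef] at hTcompact
    have hdiffeq : B - ContinuousLinearMap.id ℂ ellTwo = S + T + T * S := by
      rw [← ContinuousLinearMap.one_def, ← hE3]
      noncomm_ring
    rw [hdiffeq]
    have hco : ⇑(S + T + T * S) = (⇑S + ⇑T) + (⇑T ∘ ⇑S) := by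
      funext z
      simp [ContinuousLinearMap.add_apply, ContinuousLinearMap.mul_apply, Function.comp]
    rw [hco]
    exact (hScompact.add hTcompact).add (hScompact.clm_comp T)
  · -- numerical range
    obtain ⟨uA, huA⟩ := huS
    set K := ‖(↑uA⁻¹ : ellTwo →L[ℂ] ellTwo)‖ with hK
    have hKpos : 0 < K := by
      rw [hK, norm_pos_iff]
      intro h0
      have h1 : (↑uA⁻¹ : ellTwo →L[ℂ] ellTwo) * ↑uA = 1 := uA.inv_mul
      rw [h0, zero_mul] at h1
      have h2 := congrArg (fun f : ellTwo →L[ℂ] ellTwo => (f (lp.single 2 0 1) : ℕ → ℂ) 0) h1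
      simp only [ContinuousLinearMap.zero_apply, ContinuousLinearMap.one_apply] at h2
      rw [lp.single_apply_self] at h2
      have h3 : ((0 : ellTwo) : ℕ → ℂ) 0 = 0 :=
        congrFun (lp.coeFn_zero (fun _ : ℕ => ℂ) 2) 0
      rw [h3] at h2
      exact zero_ne_one h2
    have hlower : ∀ y : ellTwo, ‖y‖ = 1 → 1 / K ≤ ‖(1 + S) y‖ := by
      intro y hy
      have h1 : y = (↑uA⁻¹ : ellTwo →L[ℂ] ellTwo) ((1 + S) y) := by
        rw [← huA]
        calc y = ((↑uA⁻¹ * ↑uA : ellTwo →L[ℂ] ellTwo)) y := by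
              rw [uA.inv_mul, ContinuousLinearMap.one_apply]
        _ = (↑uA⁻¹ : ellTwo →L[ℂ] ellTwo) ((↑uA : ellTwo →L[ℂ] ellTwo) y) :=
              ContinuousLinearMap.mul_apply _ _ _
      have h2 : (1:ℝ) ≤ K * ‖(1 + S) y‖ := by
        calc (1:ℝ) = ‖y‖ := hy.symm
        _ = ‖(↑uA⁻¹ : ellTwo →L[ℂ] ellTwo) ((1 + S) y)‖ := by rw [← h1]
        _ ≤ K * ‖(1 + S) y‖ := ContinuousLinearMap.le_opNorm _ _
      rw [div_le_iff₀ hKpos]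
      linarith [mul_comm K ‖(1 + S) y‖, h2]
    have hsub : {w : ℂ | ∃ y : ellTwo, ‖y‖ = 1 ∧ w = (inner ℂ (B y) y : ℂ)} ⊆
        {w : ℂ | (1/K)^2 ≤ ‖w‖} := by
      rintro w ⟨y, hy1, rfl⟩
      have hBy : (inner ℂ (B y) y : ℂ) = ((‖(1 + S) y‖ : ℝ) : ℂ)^2 := by
        rw [← hE3, ContinuousLinearMap.mul_apply, hadj,
          ContinuousLinearMap.adjoint_inner_left, inner_self_eq_norm_sq_to_K]
        norm_cast
      show (1/K)^2 ≤ ‖(inner ℂ (B y) y : ℂ)‖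
      rw [hBy, norm_pow, Complex.norm_real, Real.norm_eq_abs,
        abs_of_nonneg (norm_nonneg _)]
      have := hlower y hy1
      have h0 : 0 ≤ 1/K := by positivity
      exact pow_le_pow_left₀ h0 this 2
    intro hmem
    have hcl := closure_minimal hsub (isClosed_le continuous_const continuous_norm) hmem
    simp only [Set.mem_setOf_eq, norm_zero] at hcl
    have : (0:ℝ) < (1/K)^2 := by positivity
    linarith
  · -- invertibility
    obtain ⟨u, hu⟩ := huB
    refine ⟨↑u⁻¹, ?_, ?_⟩
    · rw [← ContinuousLinearMap.one_def, ← ContinuousLinearMap.mul_def, ← hu]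
      exact u.inv_mul
    · rw [← ContinuousLinearMap.one_def, ← ContinuousLinearMap.mul_def, ← hu]
      exact u.mul_inv

end
end
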